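/- arXiv:2401.16647 — 6 statements merged into one kernel-verified Lean document; each statement's English description precedes it below -/
import Mathlib

section
/- For every integer ℓ ≥ 3, the quantity k_ℓ (equal to ℓ² − ℓ·log₂ℓ + log₂ℓ − 1 when ℓ is a power of 2, and ℓ² − (μ⌊log₂ℓ⌋ + (ℓ−μ)⌈log₂ℓ⌉) + ⌊log₂ℓ⌋ with μ = 2^⌈log₂ℓ⌉ − ℓ otherwise) satisfies k_ℓ ≥ ℓ² − ℓ·log₂ℓ + log₂ℓ − ℓ(1 − 1/(2 ln 2)) − 1/(2 ln 2). -/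
open Real

lemma chord_log {x : ℝ} (h1 : 1 ≤ x) (h2 : x ≤ 2) : (x - 1) * Real.log 2 ≤ Real.log x := by
  have hconc := strictConcaveOn_log_Ioi.concaveOn
  have h := hconc.2 (Set.mem_Ioi.2 (by norm_num : (0:ℝ) < 1))
    (Set.mem_Ioi.2 (by norm_num : (0:ℝ) < 2))
    (by linarith : (0:ℝ) ≤ 2 - x) (by linarith : (0:ℝ) ≤ x - 1) (by ring)
  have hx : (2 - x) • (1:ℝ) + (x - 1) • (2:ℝ) = x := by simp [smul_eq_mul]; ring
  rw [hx] at h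
  simpa [smul_eq_mul, Real.log_one] using h

set_option maxHeartbeats 1000000 in
theorem stmt4 (ℓ : ℕ) (hℓ : 3 ≤ ℓ) (k : ℕ)
    (hk1 : (∃ m : ℕ, ℓ = 2 ^ m) →
      (k : ℝ) = (ℓ : ℝ) ^ 2 - (ℓ : ℝ) * Real.logb 2 ℓ + Real.logb 2 ℓ - 1)
    (hk2 : (¬ ∃ m : ℕ, ℓ = 2 ^ m) →
      k = ℓ ^ 2 - ((2 ^ Nat.clog 2 ℓ - ℓ) * Nat.log 2 ℓ
            + (ℓ - (2 ^ Nat.clog 2 ℓ - ℓ)) * Nat.clog 2 ℓ) + Nat.log 2 ℓ) :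
    (k : ℝ) ≥ (ℓ : ℝ) ^ 2 - (ℓ : ℝ) * Real.logb 2 ℓ + Real.logb 2 ℓ
      - (ℓ : ℝ) * (1 - 1 / (2 * Real.log 2)) - 1 / (2 * Real.log 2) := by
  have hlog2l : (0.6931471803 : ℝ) < Real.log 2 := Real.log_two_gt_d9
  have hlog2u : Real.log 2 < 0.6931471808 := Real.log_two_lt_d9
  have hℓ3 : (3:ℝ) ≤ (ℓ:ℝ) := by exact_mod_cast hℓ
  have hcu : 1 / (2 * Real.log 2) ≤ 0.722 := by
    rw [div_le_iff₀ (by linarith)]; nlinarith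
  have hcl : (0.72:ℝ) ≤ 1 / (2 * Real.log 2) := by
    rw [le_div_iff₀ (by linarith)]; nlinarith
  by_cases hp : ∃ m : ℕ, ℓ = 2 ^ m
  · rw [hk1 hp]
    nlinarith [hcu, hℓ3]
  · have hℓ0 : ℓ ≠ 0 := by omega
    obtain ⟨a, ha⟩ : ∃ a, Nat.log 2 ℓ = a := ⟨_, rfl⟩
    have ha2 : 2 ^ a ≤ ℓ := ha ▸ Nat.pow_log_le_self 2 hℓ0
    have hlt : ℓ < 2 ^ (a+1) := ha ▸ Nat.lt_pow_succ_log_self (by norm_num) ℓ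
    have hgt : 2 ^ a < ℓ := lt_of_le_of_ne ha2 (fun h => hp ⟨a, h.symm⟩)
    have hclog : Nat.clog 2 ℓ = a + 1 := by
      apply le_antisymm
      · exact (Nat.clog_le_iff_le_pow (by norm_num)).2 (le_of_lt hlt)
      · exact (Nat.lt_clog_iff_pow_lt (by norm_num)).2 hgt
    have ha1 : 1 ≤ a := ha ▸ Nat.log_pos (by norm_num) (by omega)
    have hpow : 2 ^ (a+1) = 2 * 2 ^ a := by rw [pow_succ]; ring
    have haℓ : a + 1 < ℓ := by
      have := Nat.lt_two_pow_self (n := a)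
      omega
    -- the nat value of k
    have hk := hk2 hp
    rw [hclog, ha] at hk
    obtain ⟨μ, hμ⟩ : ∃ μ, 2 ^ (a+1) - ℓ = μ := ⟨_, rfl⟩
    rw [hμ] at hk
    have hμℓ : μ < ℓ := by omega
    have e1 : (ℓ - μ) * (a+1) = ℓ * (a+1) - μ * (a+1) := Nat.sub_mul _ _ _
    have e2 : μ * (a+1) = μ * a + μ := by ring
    have e3 : μ * a + (ℓ - μ) * (a + 1) = ℓ * (a+1) - μ := by
      rw [e1]
      have h4 : μ * (a+1) ≤ ℓ * (a+1) := Nat.mul_le_mul_right _ (le_of_lt hμℓ)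
      omega
    rw [e3] at hk
    have h5 : ℓ * (a+1) ≤ ℓ ^ 2 := by
      have : ℓ * (a+1) ≤ ℓ * ℓ := Nat.mul_le_mul_left _ (le_of_lt haℓ)
      nlinarith
    have hμle : μ ≤ ℓ * (a+1) := by nlinarith
    -- cast to ℝ
    have hkr : (k:ℝ) = (ℓ:ℝ)^2 - ((ℓ:ℝ) * (a+1) - (μ:ℝ)) + a := by
      have h7 : ℓ * (a+1) - μ ≤ ℓ ^ 2 := by omega
      rw [hk, Nat.cast_add, Nat.cast_sub h7, Nat.cast_sub hμle]
      push_cast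
      ring
    have hμr : (μ:ℝ) = 2 * (2:ℝ)^a - ℓ := by
      have hcast : ((2^(a+1):ℕ):ℝ) = 2 * (2:ℝ)^a := by push_cast; ring
      rw [← hμ, Nat.cast_sub (le_of_lt hlt), hcast]
    have ht0 : (0:ℝ) < (2:ℝ)^a := by positivity
    have ht2 : (2:ℝ) ≤ (2:ℝ)^a := by
      calc (2:ℝ) = 2^1 := by norm_num
      _ ≤ (2:ℝ)^a := by apply pow_le_pow_right₀ (by norm_num) ha1
    have htℓ1 : (2:ℝ)^a + 1 ≤ (ℓ:ℝ) := by
      have h8 : ((2^a + 1 : ℕ) : ℝ) ≤ (ℓ:ℝ) := by exact_mod_cast hgt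
      push_cast at h8
      linarith
    have htℓ2 : (ℓ:ℝ) ≤ 2 * (2:ℝ)^a := by
      have h9 : ((ℓ:ℕ) : ℝ) < ((2^(a+1) : ℕ) : ℝ) := by exact_mod_cast hlt
      push_cast at h9
      have h9' : (2:ℝ)^(a+1) = 2 * (2:ℝ)^a := by ring
      linarith
    -- log bound
    have hx1 : (1:ℝ) ≤ (ℓ:ℝ)/(2:ℝ)^a := by rw [le_div_iff₀ ht0]; linarith
    have hx2 : (ℓ:ℝ)/(2:ℝ)^a ≤ 2 := by rw [div_le_iff₀ ht0]; linarith
    have hchord := chord_log hx1 hx2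
    have hlogx : Real.log ((ℓ:ℝ)/(2:ℝ)^a) = Real.log ℓ - a * Real.log 2 := by
      rw [Real.log_div (by positivity) (by positivity), Real.log_pow]
    have hLd : Real.logb 2 (ℓ:ℝ) * Real.log 2 = Real.log ℓ := by
      rw [Real.logb, div_mul_cancel₀]
      exact Real.log_ne_zero_of_pos_of_ne_one (by norm_num) (by norm_num)
    have hLa : (ℓ:ℝ)/(2:ℝ)^a - 1 ≤ Real.logb 2 (ℓ:ℝ) - a := by
      have h6 : (Real.logb 2 (ℓ:ℝ) - a) * Real.log 2 = Real.log ((ℓ:ℝ)/(2:ℝ)^a) := by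
        rw [hlogx, sub_mul, hLd]
      have h7 : ((ℓ:ℝ)/(2:ℝ)^a - 1) * Real.log 2 ≤ (Real.logb 2 (ℓ:ℝ) - a) * Real.log 2 := by
        rw [h6]; exact hchord
      exact le_of_mul_le_mul_right h7 (by linarith)
    have hLt : (ℓ:ℝ) - (2:ℝ)^a ≤ (2:ℝ)^a * (Real.logb 2 (ℓ:ℝ) - a) := by
      have h10 := mul_le_mul_of_nonneg_left hLa (le_of_lt ht0)
      rw [mul_sub, mul_div_cancel₀ _ (ne_of_gt ht0)] at h10
      linarith
    rw [hkr]
    have key : ((ℓ:ℝ) - 1) * ((ℓ:ℝ) - (2:ℝ)^a) ≤ ((ℓ:ℝ) - 1) * ((2:ℝ)^a * (Real.logb 2 (ℓ:ℝ) - a)) :=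
      mul_le_mul_of_nonneg_left hLt (by linarith)
    nlinarith [key, mul_nonneg (sub_nonneg.2 htℓ2) (by linarith : (0:ℝ) ≤ (ℓ:ℝ) - (2:ℝ)^a - 1),
      sq_nonneg ((ℓ:ℝ) - (2:ℝ)^a - 1), sq_nonneg (2*(2:ℝ)^a - (ℓ:ℝ)), mul_pos ht0 ht0, hcu, hcl, ht2, htℓ1, htℓ2]
end

section
/- Let ℓ ≥ 3, n = 2^ℓ, and let s be an anchor-decodable sequence. Then the encoding map φ : {0,1}^{k(s)} → {0,1}^n defined by placing ℓ ones at positions p_ℓ, p_{ℓ−1}, …, p_1 in ℤ_n, where p_ℓ = dec(x_ℓ) and p_{j} = p_{j+1} + 1 + dec(x_j) mod n (with x = x_ℓ ∥ x_{ℓ−1} ∥ ⋯ ∥ x_1, |x_i| = s(i)), produces a vector of Hamming weight exactly ℓ for every input x. -/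
/-- The vector γ associated with a sequence `s` of length `ℓ`:
`γ 0 = 2^ℓ - 1 - ∑_{i=1}^{ℓ-1} 2^{s i}` and `γ m = 2^{s (ℓ - m)} - 1` for `1 ≤ m ≤ ℓ-1`. -/
def gammaVec (ℓ : ℕ) (s : ℕ → ℕ) (m : ℕ) : ℕ :=
  if m = 0 then 2 ^ ℓ - 1 - ∑ i ∈ Finset.Icc 1 (ℓ - 1), 2 ^ (s i)
  else 2 ^ (s (ℓ - m)) - 1

/-- A non-decreasing sequence `s` of length `ℓ` with `s ℓ = ℓ` is anchor-decodable if
`2^ℓ - ∑_{i<ℓ} 2^{s i} ≥ 2^{s (ℓ-1)}` and γ differs from all its non-trivial cyclic shifts. -/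
def AnchorDecodable (ℓ : ℕ) (s : ℕ → ℕ) : Prop :=
  (∀ i ∈ Finset.Icc 1 ℓ, ∀ j ∈ Finset.Icc 1 ℓ, i ≤ j → s i ≤ s j) ∧
  s ℓ = ℓ ∧
  2 ^ (s (ℓ - 1)) ≤ 2 ^ ℓ - ∑ i ∈ Finset.Icc 1 (ℓ - 1), 2 ^ (s i) ∧
  ∀ ℓ₀ : ℕ, 0 < ℓ₀ → ℓ₀ < ℓ →
    ∃ m < ℓ, gammaVec ℓ s ((m + ℓ₀) % ℓ) ≠ gammaVec ℓ s m

open Classical in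
theorem stmt6 (ℓ : ℕ) (hℓ : 3 ≤ ℓ) (s : ℕ → ℕ) (hs : AnchorDecodable ℓ s)
    (d : ℕ → ℕ) (hd : ∀ j ∈ Finset.Icc 1 ℓ, d j < 2 ^ (s j))
    (p : ℕ → ZMod (2 ^ ℓ))
    (hpl : p ℓ = (d ℓ : ZMod (2 ^ ℓ)))
    (hp : ∀ j ∈ Finset.Icc 1 (ℓ - 1), p j = p (j + 1) + 1 + (d j : ZMod (2 ^ ℓ)))
    (c : ZMod (2 ^ ℓ) → Bool)
    (hc : ∀ z, c z = decide (∃ j ∈ Finset.Icc 1 ℓ, p j = z)) :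
    (Finset.univ.filter fun z => c z = true).card = ℓ := by
  -- the sum bound
  have hS : ∑ i ∈ Finset.Icc 1 (ℓ - 1), 2 ^ (s i) < 2 ^ ℓ := by
    have h1 : (0:ℕ) < 2 ^ (s (ℓ - 1)) := Nat.pow_pos (by norm_num)
    have := lt_of_lt_of_le h1 hs.2.2.1
    exact Nat.lt_of_sub_pos this
  -- the cumulative offsets
  set N : ℕ → ℕ := fun i => ∑ m ∈ Finset.Icc i (ℓ - 1), (1 + d m) with hN
  -- key expression for p
  have hpN : ∀ t : ℕ, t < ℓ → p (ℓ - t) = p ℓ + (N (ℓ - t) : ZMod (2 ^ ℓ)) := by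
    intro t
    induction t with
    | zero =>
      intro _
      have he : Finset.Icc ℓ (ℓ - 1) = ∅ := Finset.Icc_eq_empty (by omega)
      simp [hN, he]
    | succ t ih =>
      intro ht
      have ht' : t < ℓ := by omega
      have hi1 : ℓ - (t + 1) + 1 = ℓ - t := by omega
      have hile : ℓ - (t + 1) ≤ ℓ - 1 := by omega
      have hstep := hp (ℓ - (t + 1)) (Finset.mem_Icc.mpr ⟨by omega, hile⟩)
      rw [hi1] at hstep
      have hsum : N (ℓ - (t + 1)) = (1 + d (ℓ - (t + 1))) + N (ℓ - t) := by
        have : Finset.Icc (ℓ - (t + 1)) (ℓ - 1)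
            = insert (ℓ - (t + 1)) (Finset.Icc (ℓ - t) (ℓ - 1)) := by
          ext x
          simp only [Finset.mem_Icc, Finset.mem_insert]
          omega
        simp only [hN, this]
        rw [Finset.sum_insert (by simp [Finset.mem_Icc]; omega)]
      rw [hstep, ih ht', hsum]
      push_cast
      ring
  have hpN' : ∀ i ∈ Finset.Icc 1 ℓ, p i = p ℓ + (N i : ZMod (2 ^ ℓ)) := by
    intro i hi
    rw [Finset.mem_Icc] at hi
    have : i = ℓ - (ℓ - i) := by omega
    rw [this]
    exact hpN (ℓ - i) (by omega)
  -- bound on N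
  have hNbound : ∀ i, 1 ≤ i → N i < 2 ^ ℓ := by
    intro i hi
    calc N i ≤ ∑ m ∈ Finset.Icc i (ℓ - 1), 2 ^ (s m) := by
          apply Finset.sum_le_sum
          intro m hm
          rw [Finset.mem_Icc] at hm
          have := hd m (Finset.mem_Icc.mpr ⟨by omega, by omega⟩)
          omega
      _ ≤ ∑ m ∈ Finset.Icc 1 (ℓ - 1), 2 ^ (s m) := by
          apply Finset.sum_le_sum_of_subset
          apply Finset.Icc_subset_Icc_left hi
      _ < 2 ^ ℓ := hS
  -- strict antitonicity of N on [1, ℓ]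
  have hNmono : ∀ i j, 1 ≤ i → i < j → j ≤ ℓ → N j < N i := by
    intro i j hi hij hj
    apply Finset.sum_lt_sum_of_subset
    · exact Finset.Icc_subset_Icc_left (le_of_lt hij)
    · exact Finset.mem_Icc.mpr ⟨le_refl i, by omega⟩
    · simp [Finset.mem_Icc]; omega
    · omega
    · intro k _ _; exact Nat.zero_le _
  -- injectivity of p on Icc 1 ℓ
  have hpinj : Set.InjOn p (Finset.Icc 1 ℓ) := by
    intro i hi j hj hij
    simp only [Finset.coe_Icc, Set.mem_Icc] at hi hj
    by_contra hne
    have hNe : N i ≠ N j := by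
      rcases Nat.lt_or_ge i j with h | h
      · exact Nat.ne_of_gt (hNmono i j hi.1 h hj.2)
      · exact Nat.ne_of_lt (hNmono j i hj.1 (by omega) hi.2)
    apply hNe
    have h1 := hpN' i (Finset.mem_Icc.mpr ⟨hi.1, hi.2⟩)
    have h2 := hpN' j (Finset.mem_Icc.mpr ⟨hj.1, hj.2⟩)
    rw [h1, h2] at hij
    have hcast : (N i : ZMod (2 ^ ℓ)) = (N j : ZMod (2 ^ ℓ)) := by
      exact add_left_cancel hij
    haveI : NeZero (2 ^ ℓ) := ⟨by positivity⟩
    have := congrArg ZMod.val hcast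
    rwa [ZMod.val_cast_of_lt (hNbound i hi.1), ZMod.val_cast_of_lt (hNbound j hj.1)] at this
  -- the filter set is the image of p
  have himg : (Finset.univ.filter fun z => c z = true) = (Finset.Icc 1 ℓ).image p := by
    ext z
    simp only [Finset.mem_filter, Finset.mem_univ, true_and, hc, decide_eq_true_eq,
      Finset.mem_image]
  rw [himg, Finset.card_image_of_injOn hpinj, Nat.card_Icc]
  omega
end

section
/- Let ℓ ≥ 3, n = 2^ℓ, and let s be an anchor-decodable sequence. Then the encoding map φ : {0,1}^{k(s)} → {0,1}^n (placing ones at positions determined by cumulative gaps dec(x_j) as in the gap-encoding construction) is injective. -/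
open Classical in
noncomputable def gapEncode (ℓ : ℕ) (d : ℕ → ℕ) : ZMod (2 ^ ℓ) → Bool :=
  fun z => decide (∃ j ∈ Finset.Icc 1 ℓ,
    z = ((d ℓ + ∑ i ∈ Finset.Icc j (ℓ - 1), (1 + d i) : ℕ) : ZMod (2 ^ ℓ)))

namespace Stmt7Aux

open Finset

/-- the gap-minus-one sequence indexed by residues `m < ℓ`; `m = 0` is the anchor gap. -/
def eS (ℓ : ℕ) (d : ℕ → ℕ) (m : ℕ) : ℕ :=
  if m = 0 then 2 ^ ℓ - ℓ - ∑ j ∈ Finset.Icc 1 (ℓ - 1), d j else d (ℓ - m)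

/-- the (periodic) gap sequence. -/
def gS (ℓ : ℕ) (d : ℕ → ℕ) (t : ℕ) : ℕ := 1 + eS ℓ d (t % ℓ)

/-- positions, lifted to ℕ. -/
def P (ℓ : ℕ) (d : ℕ → ℕ) (m : ℕ) : ℕ := d ℓ + ∑ t ∈ Finset.Icc 1 m, gS ℓ d t

lemma gS_pos (ℓ : ℕ) (d : ℕ → ℕ) (t : ℕ) : 1 ≤ gS ℓ d t := Nat.le_add_right 1 _

lemma gS_period (ℓ : ℕ) (d : ℕ → ℕ) (k t : ℕ) : gS ℓ d (t + k * ℓ) = gS ℓ d t := by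
  simp [gS, Nat.add_mul_mod_self_right]

lemma P_succ (ℓ : ℕ) (d : ℕ → ℕ) (m : ℕ) :
    P ℓ d (m + 1) = P ℓ d m + gS ℓ d (m + 1) := by
  unfold P
  rw [Finset.sum_Icc_succ_top (by omega)]
  ring

lemma P_strictMono (ℓ : ℕ) (d : ℕ → ℕ) : StrictMono (P ℓ d) :=
  strictMono_nat_of_lt_succ fun m => by
    have := gS_pos ℓ d (m + 1); rw [P_succ]; omega

section withHyp

variable {ℓ : ℕ} {s d : ℕ → ℕ}

lemma sum_d_bound (hs : AnchorDecodable ℓ s) (hd : ∀ j ∈ Finset.Icc 1 ℓ, d j < 2 ^ (s j)) :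
    (∑ j ∈ Finset.Icc 1 (ℓ - 1), d j) + (ℓ - 1) ≤ ∑ j ∈ Finset.Icc 1 (ℓ - 1), 2 ^ (s j) := by
  have h : ∑ j ∈ Finset.Icc 1 (ℓ - 1), (d j + 1) ≤ ∑ j ∈ Finset.Icc 1 (ℓ - 1), 2 ^ (s j) :=
    Finset.sum_le_sum (fun j hj => by
      simp only [Finset.mem_Icc] at hj
      exact hd j (Finset.mem_Icc.mpr ⟨hj.1, by omega⟩))
  simpa [Finset.sum_add_distrib, Nat.card_Icc, mul_one] using h

lemma A_bound (hs : AnchorDecodable ℓ s) :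
    (∑ j ∈ Finset.Icc 1 (ℓ - 1), 2 ^ (s j)) + 2 ^ (s (ℓ - 1)) ≤ 2 ^ ℓ := by
  have h := hs.2.2.1
  have h1 : 1 ≤ 2 ^ (s (ℓ - 1)) := Nat.one_le_two_pow
  omega

lemma lD_bound (hℓ : 3 ≤ ℓ) (hs : AnchorDecodable ℓ s)
    (hd : ∀ j ∈ Finset.Icc 1 ℓ, d j < 2 ^ (s j)) :
    ℓ + (∑ j ∈ Finset.Icc 1 (ℓ - 1), d j) ≤ 2 ^ ℓ := by
  have h1 := sum_d_bound hs hd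
  have h2 := A_bound hs
  have h3 : 1 ≤ 2 ^ (s (ℓ - 1)) := Nat.one_le_two_pow
  omega

lemma sum_reflect (hℓ : 3 ≤ ℓ) (f : ℕ → ℕ) {a b : ℕ} (h1 : 1 ≤ a) (hb : b ≤ ℓ - 1)
    (hab : a + b = ℓ) :
    ∑ t ∈ Finset.Icc 1 b, f (ℓ - t) = ∑ i ∈ Finset.Icc a (ℓ - 1), f i := by
  refine Finset.sum_nbij' (fun t => ℓ - t) (fun i => ℓ - i) ?_ ?_ ?_ ?_ ?_
  all_goals intro x hx
  all_goals simp only [Finset.mem_Icc] at hx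
  all_goals first
    | rfl
    | (simp only [Finset.mem_Icc]; omega)
    | omega

lemma sum_gS_one_period (hℓ : 3 ≤ ℓ) (hs : AnchorDecodable ℓ s)
    (hd : ∀ j ∈ Finset.Icc 1 ℓ, d j < 2 ^ (s j)) :
    ∑ t ∈ Finset.Icc 1 ℓ, gS ℓ d t = 2 ^ ℓ := by
  have hsplit : ∑ t ∈ Finset.Icc 1 ℓ, gS ℓ d t
      = (∑ t ∈ Finset.Icc 1 (ℓ - 1), gS ℓ d t) + gS ℓ d ℓ := by
    have h := Finset.sum_Icc_succ_top (a := 1) (b := ℓ - 1) (by omega) (gS ℓ d)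
    rw [Nat.sub_add_cancel (by omega)] at h
    exact h
  have hlow : ∑ t ∈ Finset.Icc 1 (ℓ - 1), gS ℓ d t
      = ∑ t ∈ Finset.Icc 1 (ℓ - 1), (1 + d (ℓ - t)) := by
    refine Finset.sum_congr rfl (fun t ht => ?_)
    simp only [Finset.mem_Icc] at ht
    have h1 : t % ℓ = t := Nat.mod_eq_of_lt (by omega)
    have h2 : t ≠ 0 := by omega
    simp [gS, eS, h1, h2]
  have hrefl : ∑ t ∈ Finset.Icc 1 (ℓ - 1), d (ℓ - t)
      = ∑ j ∈ Finset.Icc 1 (ℓ - 1), d j := sum_reflect hℓ d (by omega) (by omega) (by omega)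
  have hgl : gS ℓ d ℓ = 1 + (2 ^ ℓ - ℓ - ∑ j ∈ Finset.Icc 1 (ℓ - 1), d j) := by
    simp [gS, eS, Nat.mod_self]
  have hcard : ∑ t ∈ Finset.Icc 1 (ℓ - 1), (1 + d (ℓ - t))
      = (ℓ - 1) + ∑ t ∈ Finset.Icc 1 (ℓ - 1), d (ℓ - t) := by
    rw [Finset.sum_add_distrib]
    simp [Nat.card_Icc]
  have hbound := lD_bound hℓ hs hd
  rw [hsplit, hlow, hcard, hrefl, hgl]
  omega

lemma P_period (hℓ : 3 ≤ ℓ) (hs : AnchorDecodable ℓ s)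
    (hd : ∀ j ∈ Finset.Icc 1 ℓ, d j < 2 ^ (s j)) (m : ℕ) :
    P ℓ d (m + ℓ) = P ℓ d m + 2 ^ ℓ := by
  induction m with
  | zero =>
    have h := sum_gS_one_period hℓ hs hd
    simp [P, h]
  | succ m ih =>
    have h1 : m + 1 + ℓ = (m + ℓ) + 1 := by omega
    rw [h1, P_succ, ih, P_succ]
    have h2 : m + ℓ + 1 = (m + 1) + 1 * ℓ := by ring
    rw [h2, gS_period]
    ring

lemma P_mul (hℓ : 3 ≤ ℓ) (hs : AnchorDecodable ℓ s)
    (hd : ∀ j ∈ Finset.Icc 1 ℓ, d j < 2 ^ (s j)) (m k : ℕ) :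
    P ℓ d (m + k * ℓ) = P ℓ d m + k * 2 ^ ℓ := by
  induction k with
  | zero => simp
  | succ k ih =>
    have h1 : m + (k + 1) * ℓ = (m + k * ℓ) + ℓ := by ring
    rw [h1, P_period hℓ hs hd, ih]
    ring

lemma sum_gap_eq (hℓ : 3 ≤ ℓ) {j : ℕ} (h1 : 1 ≤ j) (h2 : j ≤ ℓ) :
    ∑ i ∈ Finset.Icc j (ℓ - 1), (1 + d i) = ∑ t ∈ Finset.Icc 1 (ℓ - j), gS ℓ d t := by
  rcases eq_or_lt_of_le h2 with rfl | hlt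
  · rw [Nat.sub_self, Finset.Icc_eq_empty (by omega), Finset.Icc_eq_empty (by omega)]
    simp
  · have hstep : ∑ t ∈ Finset.Icc 1 (ℓ - j), gS ℓ d t
        = ∑ t ∈ Finset.Icc 1 (ℓ - j), (1 + d (ℓ - t)) := by
      refine Finset.sum_congr rfl (fun t ht => ?_)
      simp only [Finset.mem_Icc] at ht
      have ht1 : t % ℓ = t := Nat.mod_eq_of_lt (by omega)
      have ht2 : t ≠ 0 := by omega
      simp [gS, eS, ht1, ht2]
    rw [hstep, sum_reflect hℓ (fun i => 1 + d i) h1 (by omega) (by omega)]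

lemma mem_iff (hℓ : 3 ≤ ℓ) (z : ZMod (2 ^ ℓ)) :
    gapEncode ℓ d z = true ↔ ∃ m < ℓ, z = ((P ℓ d m : ℕ) : ZMod (2 ^ ℓ)) := by
  simp only [gapEncode, decide_eq_true_eq]
  constructor
  · rintro ⟨j, hj, rfl⟩
    simp only [Finset.mem_Icc] at hj
    refine ⟨ℓ - j, by omega, ?_⟩
    congr 1
    unfold P
    rw [sum_gap_eq hℓ hj.1 hj.2]
  · rintro ⟨m, hm, rfl⟩
    refine ⟨ℓ - m, Finset.mem_Icc.mpr ⟨by omega, by omega⟩, ?_⟩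
    congr 1
    unfold P
    rw [sum_gap_eq hℓ (by omega) (by omega), show ℓ - (ℓ - m) = m from by omega]

lemma mem_P (hℓ : 3 ≤ ℓ) (hs : AnchorDecodable ℓ s)
    (hd : ∀ j ∈ Finset.Icc 1 ℓ, d j < 2 ^ (s j)) (m : ℕ) :
    gapEncode ℓ d ((P ℓ d m : ℕ) : ZMod (2 ^ ℓ)) = true := by
  rw [mem_iff hℓ]
  refine ⟨m % ℓ, Nat.mod_lt _ (by omega), ?_⟩
  conv_lhs => rw [← Nat.mod_add_div' m ℓ]
  rw [P_mul hℓ hs hd, Nat.cast_add, Nat.cast_mul, ZMod.natCast_self, mul_zero, add_zero]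

lemma not_mem_between (hℓ : 3 ≤ ℓ) (hs : AnchorDecodable ℓ s)
    (hd : ∀ j ∈ Finset.Icc 1 ℓ, d j < 2 ^ (s j)) (m t : ℕ) (ht1 : 1 ≤ t)
    (ht2 : t < gS ℓ d (m + 1)) :
    gapEncode ℓ d ((P ℓ d m + t : ℕ) : ZMod (2 ^ ℓ)) = false := by
  by_contra h
  rw [Bool.not_eq_false, mem_iff hℓ] at h
  obtain ⟨m', hm', hz⟩ := h
  rw [ZMod.natCast_eq_natCast_iff] at hz
  set X := P ℓ d m + t + P ℓ d m' * 2 ^ ℓ with hX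
  have hmod : P ℓ d m' ≡ X [MOD 2 ^ ℓ] := by
    unfold Nat.ModEq
    rw [hX, Nat.add_mul_mod_self_right]
    exact hz.symm
  have hle : P ℓ d m' ≤ X := by
    have h2 : P ℓ d m' ≤ P ℓ d m' * 2 ^ ℓ :=
      Nat.le_mul_of_pos_right _ (by positivity)
    omega
  obtain ⟨k, hk⟩ := (Nat.modEq_iff_dvd' hle).mp hmod
  rw [Nat.mul_comm] at hk
  have hPk : P ℓ d (m' + k * ℓ) = X := by
    rw [P_mul hℓ hs hd]; omega
  have hPm : P ℓ d (m + P ℓ d m' * ℓ) = P ℓ d m + P ℓ d m' * 2 ^ ℓ :=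
    P_mul hℓ hs hd m _
  have h1 : P ℓ d (m + P ℓ d m' * ℓ) < P ℓ d (m' + k * ℓ) := by omega
  have h2 : P ℓ d (m' + k * ℓ) < P ℓ d (m + P ℓ d m' * ℓ + 1) := by
    rw [P_succ]
    have he : m + P ℓ d m' * ℓ + 1 = (m + 1) + P ℓ d m' * ℓ := by ring
    rw [he, gS_period]
    omega
  have hlt1 := (P_strictMono ℓ d).lt_iff_lt.mp h1
  have hlt2 := (P_strictMono ℓ d).lt_iff_lt.mp h2
  omega

end withHyp

section endgame

variable {ℓ : ℕ} {s d : ℕ → ℕ}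

lemma gammaVec_zero (ℓ : ℕ) (s : ℕ → ℕ) :
    gammaVec ℓ s 0 = 2 ^ ℓ - 1 - ∑ i ∈ Finset.Icc 1 (ℓ - 1), 2 ^ (s i) := by
  simp [gammaVec]

lemma eS_zero (ℓ : ℕ) (d : ℕ → ℕ) :
    eS ℓ d 0 = 2 ^ ℓ - ℓ - ∑ j ∈ Finset.Icc 1 (ℓ - 1), d j := by
  simp [eS]

lemma gamma_antitone (hℓ : 3 ≤ ℓ) (hs : AnchorDecodable ℓ s) {m m' : ℕ}
    (h1 : 1 ≤ m) (h2 : m ≤ m') (h3 : m' ≤ ℓ - 1) :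
    gammaVec ℓ s m' ≤ gammaVec ℓ s m := by
  have hmono := hs.1 (ℓ - m') (Finset.mem_Icc.mpr ⟨by omega, by omega⟩) (ℓ - m)
      (Finset.mem_Icc.mpr ⟨by omega, by omega⟩) (by omega)
  have hpow : (2:ℕ) ^ (s (ℓ - m')) ≤ 2 ^ (s (ℓ - m)) :=
    Nat.pow_le_pow_right (by norm_num) hmono
  simp only [gammaVec, if_neg (by omega : m ≠ 0), if_neg (by omega : m' ≠ 0)]
  omega

lemma gamma_le_zero (hℓ : 3 ≤ ℓ) (hs : AnchorDecodable ℓ s) {m : ℕ}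
    (h1 : 1 ≤ m) (h3 : m ≤ ℓ - 1) : gammaVec ℓ s m ≤ gammaVec ℓ s 0 := by
  have h := gamma_antitone hℓ hs (le_refl 1) h1 h3
  have hA := A_bound hs
  have h1' : (1:ℕ) ≤ 2 ^ (s (ℓ - 1)) := Nat.one_le_two_pow
  have h2 : gammaVec ℓ s 1 ≤ gammaVec ℓ s 0 := by
    rw [gammaVec_zero, show gammaVec ℓ s 1 = 2 ^ (s (ℓ - 1)) - 1 from if_neg one_ne_zero]
    omega
  omega

lemma eS_zero_ge (hℓ : 3 ≤ ℓ) (hs : AnchorDecodable ℓ s)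
    (hd : ∀ j ∈ Finset.Icc 1 ℓ, d j < 2 ^ (s j)) :
    gammaVec ℓ s 0 ≤ eS ℓ d 0 := by
  have h1 := sum_d_bound hs hd
  have h2 := A_bound hs
  have h3 : (1:ℕ) ≤ 2 ^ (s (ℓ - 1)) := Nat.one_le_two_pow
  rw [eS_zero, gammaVec_zero]
  omega

lemma eS_le (hℓ : 3 ≤ ℓ) (hs : AnchorDecodable ℓ s)
    (hd : ∀ j ∈ Finset.Icc 1 ℓ, d j < 2 ^ (s j)) {m : ℕ} (h1 : 1 ≤ m) (h2 : m ≤ ℓ - 1) :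
    eS ℓ d m ≤ gammaVec ℓ s m := by
  have h := hd (ℓ - m) (Finset.mem_Icc.mpr ⟨by omega, by omega⟩)
  simp only [eS, gammaVec, if_neg (by omega : m ≠ 0)]
  omega

lemma forcing (hℓ : 3 ≤ ℓ) (hs : AnchorDecodable ℓ s)
    (hd : ∀ j ∈ Finset.Icc 1 ℓ, d j < 2 ^ (s j))
    (h0 : eS ℓ d 0 = gammaVec ℓ s 0) :
    ∀ m ≤ ℓ - 1, eS ℓ d m = gammaVec ℓ s m := by
  have hDb := lD_bound hℓ hs hd
  have hA := A_bound hs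
  have h3 : (1:ℕ) ≤ 2 ^ (s (ℓ - 1)) := Nat.one_le_two_pow
  have hsum1 : ∑ j ∈ Finset.Icc 1 (ℓ - 1), (d j + 1)
      = ∑ j ∈ Finset.Icc 1 (ℓ - 1), 2 ^ (s j) := by
    have hexp : ∑ j ∈ Finset.Icc 1 (ℓ - 1), (d j + 1)
        = (∑ j ∈ Finset.Icc 1 (ℓ - 1), d j) + (ℓ - 1) := by
      rw [Finset.sum_add_distrib]
      simp [Nat.card_Icc]
    rw [eS_zero, gammaVec_zero] at h0
    omega
  have hpt := (Finset.sum_eq_sum_iff_of_le (fun j hj => by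
      simp only [Finset.mem_Icc] at hj
      exact hd j (Finset.mem_Icc.mpr ⟨hj.1, by omega⟩))).mp hsum1
  intro m hm
  rcases Nat.eq_zero_or_pos m with rfl | hm1
  · exact h0
  · have hj := hpt (ℓ - m) (Finset.mem_Icc.mpr ⟨by omega, by omega⟩)
    simp only [eS, gammaVec, if_neg (by omega : m ≠ 0)]
    omega

end endgame

end Stmt7Aux

open Stmt7Aux in
theorem stmt7 (ℓ : ℕ) (hℓ : 3 ≤ ℓ) (s : ℕ → ℕ) (hs : AnchorDecodable ℓ s)
    (d₁ d₂ : ℕ → ℕ)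
    (hd₁ : ∀ j ∈ Finset.Icc 1 ℓ, d₁ j < 2 ^ (s j))
    (hd₂ : ∀ j ∈ Finset.Icc 1 ℓ, d₂ j < 2 ^ (s j))
    (heq : gapEncode ℓ d₁ = gapEncode ℓ d₂) :
    ∀ j ∈ Finset.Icc 1 ℓ, d₁ j = d₂ j := by
  have h0 : gapEncode ℓ d₂ ((P ℓ d₂ 0 : ℕ) : ZMod (2 ^ ℓ)) = true :=
    mem_P hℓ hs hd₂ 0
  have h0' : gapEncode ℓ d₁ ((P ℓ d₂ 0 : ℕ) : ZMod (2 ^ ℓ)) = true := by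
    rw [heq]; exact h0
  obtain ⟨m₀, hm₀, hz₀⟩ := (mem_iff hℓ _).mp h0'
  have step : ∀ r, ((P ℓ d₂ r : ℕ) : ZMod (2 ^ ℓ)) = ((P ℓ d₁ (m₀ + r) : ℕ) : ZMod (2 ^ ℓ)) →
      gS ℓ d₂ (r + 1) = gS ℓ d₁ (m₀ + r + 1) := by
    intro r hr
    by_contra hne
    rcases Nat.lt_or_ge (gS ℓ d₂ (r + 1)) (gS ℓ d₁ (m₀ + r + 1)) with hlt | hge
    · have hf := not_mem_between hℓ hs hd₁ (m₀ + r) (gS ℓ d₂ (r + 1)) (gS_pos ℓ d₂ _) hlt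
      have ht := mem_P hℓ hs hd₂ (r + 1)
      have hcast : ((P ℓ d₂ (r + 1) : ℕ) : ZMod (2 ^ ℓ))
          = ((P ℓ d₁ (m₀ + r) + gS ℓ d₂ (r + 1) : ℕ) : ZMod (2 ^ ℓ)) := by
        rw [P_succ, Nat.cast_add, Nat.cast_add, hr]
      rw [hcast, ← heq] at ht
      rw [ht] at hf
      simp at hf
    · have hlt' : gS ℓ d₁ (m₀ + r + 1) < gS ℓ d₂ (r + 1) :=
        lt_of_le_of_ne hge (fun h => hne h.symm)
      have hf := not_mem_between hℓ hs hd₂ r (gS ℓ d₁ (m₀ + r + 1)) (gS_pos ℓ d₁ _) hlt'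
      have ht := mem_P hℓ hs hd₁ (m₀ + r + 1)
      have hcast : ((P ℓ d₁ (m₀ + r + 1) : ℕ) : ZMod (2 ^ ℓ))
          = ((P ℓ d₂ r + gS ℓ d₁ (m₀ + r + 1) : ℕ) : ZMod (2 ^ ℓ)) := by
        rw [P_succ, Nat.cast_add, Nat.cast_add, ← hr]
      rw [hcast, heq] at ht
      rw [ht] at hf
      simp at hf
  have pos : ∀ r, ((P ℓ d₂ r : ℕ) : ZMod (2 ^ ℓ)) = ((P ℓ d₁ (m₀ + r) : ℕ) : ZMod (2 ^ ℓ)) := by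
    intro r
    induction r with
    | zero => simpa using hz₀
    | succ r ih =>
      have hg := step r ih
      have hidx : m₀ + (r + 1) = (m₀ + r) + 1 := by omega
      rw [hidx, P_succ, P_succ, Nat.cast_add, Nat.cast_add, ih, hg]
  have gap : ∀ r, gS ℓ d₂ (r + 1) = gS ℓ d₁ (m₀ + r + 1) := fun r => step r (pos r)
  set ℓ₀ := m₀ % ℓ with hℓ₀def
  have hℓ₀lt : ℓ₀ < ℓ := Nat.mod_lt _ (by omega)
  have key : ∀ m < ℓ, eS ℓ d₂ m = eS ℓ d₁ ((m + ℓ₀) % ℓ) := by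
    intro m hm
    have hg := gap (m + ℓ - 1)
    have e1 : m + ℓ - 1 + 1 = m + 1 * ℓ := by omega
    rw [e1, gS_period] at hg
    have e2 : m₀ + (m + ℓ - 1) + 1 = (m₀ + m) + 1 * ℓ := by omega
    rw [e2, gS_period] at hg
    simp only [gS] at hg
    have hmm : m % ℓ = m := Nat.mod_eq_of_lt hm
    have hmod : (m₀ + m) % ℓ = (m + ℓ₀) % ℓ := by
      rw [hℓ₀def, Nat.add_mod_mod, Nat.add_comm m m₀]
    rw [hmm, hmod] at hg
    omega
  rcases Nat.eq_zero_or_pos ℓ₀ with hzero | hpos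
  · -- aligned case: shift is 0 mod ℓ
    intro j hj
    rw [Finset.mem_Icc] at hj
    rcases eq_or_lt_of_le hj.2 with rfl | hjlt
    · -- j = ℓ : compare anchors
      have hP : P j d₁ m₀ = P j d₁ 0 + (m₀ / j) * 2 ^ j := by
        conv_lhs => rw [show m₀ = 0 + (m₀ / j) * j from by
          have hmd := Nat.mod_add_div' m₀ j; omega]
        exact P_mul hℓ hs hd₁ 0 _
      have hp20 : P j d₂ 0 = d₂ j := by simp [P]
      have hp10 : P j d₁ 0 = d₁ j := by simp [P]
      have hzz : ((d₂ j : ℕ) : ZMod (2 ^ j)) = ((d₁ j : ℕ) : ZMod (2 ^ j)) := by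
        calc ((d₂ j : ℕ) : ZMod (2 ^ j)) = ((P j d₂ 0 : ℕ) : ZMod (2 ^ j)) := by rw [hp20]
          _ = ((P j d₁ m₀ : ℕ) : ZMod (2 ^ j)) := hz₀
          _ = ((P j d₁ 0 + (m₀ / j) * 2 ^ j : ℕ) : ZMod (2 ^ j)) := by rw [hP]
          _ = ((d₁ j : ℕ) : ZMod (2 ^ j)) := by
              rw [Nat.cast_add, Nat.cast_mul, ZMod.natCast_self, mul_zero, add_zero, hp10]
      have hmodeq := (ZMod.natCast_eq_natCast_iff _ _ _).mp hzz
      have hlt1 := hd₁ j (Finset.mem_Icc.mpr ⟨by omega, le_refl j⟩)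
      have hlt2 := hd₂ j (Finset.mem_Icc.mpr ⟨by omega, le_refl j⟩)
      rw [hs.2.1] at hlt1 hlt2
      unfold Nat.ModEq at hmodeq
      rw [Nat.mod_eq_of_lt hlt2, Nat.mod_eq_of_lt hlt1] at hmodeq
      omega
    · -- 1 ≤ j < ℓ
      have hk := key (ℓ - j) (by omega)
      have hmod0 : (ℓ - j + ℓ₀) % ℓ = ℓ - j := by
        rw [hzero, Nat.add_zero]
        exact Nat.mod_eq_of_lt (by omega)
      rw [hmod0] at hk
      simp only [eS, if_neg (show ℓ - j ≠ 0 by omega)] at hk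
      rw [show ℓ - (ℓ - j) = j by omega] at hk
      exact hk.symm
  · -- nontrivial shift: contradiction with aperiodicity of γ
    exfalso
    obtain ⟨m, hm, hne⟩ := hs.2.2.2 ℓ₀ hpos hℓ₀lt
    have hγ0le2 : gammaVec ℓ s 0 ≤ eS ℓ d₂ 0 := eS_zero_ge hℓ hs hd₂
    have hk0 := key 0 (by omega)
    rw [Nat.zero_add, Nat.mod_eq_of_lt hℓ₀lt] at hk0
    have h1 : eS ℓ d₁ ℓ₀ ≤ gammaVec ℓ s ℓ₀ := eS_le hℓ hs hd₁ hpos (by omega)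
    have h2 : gammaVec ℓ s ℓ₀ ≤ gammaVec ℓ s 0 := gamma_le_zero hℓ hs hpos (by omega)
    have he20 : eS ℓ d₂ 0 = gammaVec ℓ s 0 := by omega
    have e2 := forcing hℓ hs hd₂ he20
    have hk1 := key (ℓ - ℓ₀) (by omega)
    have hmodeq : (ℓ - ℓ₀ + ℓ₀) % ℓ = 0 := by
      rw [show ℓ - ℓ₀ + ℓ₀ = ℓ by omega, Nat.mod_self]
    rw [hmodeq] at hk1
    have h3 : gammaVec ℓ s 0 ≤ eS ℓ d₁ 0 := eS_zero_ge hℓ hs hd₁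
    have h4 : gammaVec ℓ s (ℓ - ℓ₀) ≤ gammaVec ℓ s 0 := gamma_le_zero hℓ hs (by omega) (by omega)
    have h5 := e2 (ℓ - ℓ₀) (by omega)
    have he10 : eS ℓ d₁ 0 = gammaVec ℓ s 0 := by omega
    have e1 := forcing hℓ hs hd₁ he10
    apply hne
    have hmlt : (m + ℓ₀) % ℓ < ℓ := Nat.mod_lt _ (by omega)
    calc gammaVec ℓ s ((m + ℓ₀) % ℓ) = eS ℓ d₁ ((m + ℓ₀) % ℓ) := (e1 _ (by omega)).symm
      _ = eS ℓ d₂ m := (key m hm).symm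
      _ = gammaVec ℓ s m := e2 m (by omega)
end

section
/- Let ℓ ≥ 3 and let c ∈ {0,1}^n, n = 2^ℓ, be a codeword produced by the gap encoder with anchor-decodable sequence s from a message x whose blocks x_{ℓ−1},…,x_1 are not all the all-ones strings. Let g[anchor] denote the cyclic gap (number of zeros) immediately preceding the anchor one. Then g[anchor] > 2^ℓ − 1 − ∑_{i=1}^{ℓ−1} 2^{s(i)} ≥ 2^{s(ℓ−1)} − 1 ≥ max_{1≤i≤ℓ−1}(2^{s(i)} − 1), and hence the anchor gap is the strict maximum among all ℓ cyclic gaps of c. -/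
theorem stmt8 (ℓ : ℕ) (hℓ : 3 ≤ ℓ) (s : ℕ → ℕ) (hs : AnchorDecodable ℓ s)
    (d : ℕ → ℕ)
    (hd : ∀ i ∈ Finset.Icc 1 (ℓ - 1), d i ≤ 2 ^ (s i) - 1)
    (hne : ∃ i ∈ Finset.Icc 1 (ℓ - 1), d i ≠ 2 ^ (s i) - 1)
    (ganchor : ℕ)
    (hg : ganchor = 2 ^ ℓ - ℓ - ∑ i ∈ Finset.Icc 1 (ℓ - 1), d i) :
    ganchor > 2 ^ ℓ - 1 - ∑ i ∈ Finset.Icc 1 (ℓ - 1), 2 ^ (s i) ∧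
    2 ^ ℓ - 1 - ∑ i ∈ Finset.Icc 1 (ℓ - 1), 2 ^ (s i) ≥ 2 ^ (s (ℓ - 1)) - 1 ∧
    (∀ i ∈ Finset.Icc 1 (ℓ - 1), 2 ^ (s i) - 1 ≤ 2 ^ (s (ℓ - 1)) - 1) ∧
    (∀ i ∈ Finset.Icc 1 (ℓ - 1), d i < ganchor) := by
  obtain ⟨hmono, hsl, hgap, -⟩ := hs
  set S := ∑ i ∈ Finset.Icc 1 (ℓ - 1), 2 ^ (s i) with hSdef
  set D := ∑ i ∈ Finset.Icc 1 (ℓ - 1), d i with hDdef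
  set T := 2 ^ (s (ℓ - 1)) with hTdef
  have hTpos : 1 ≤ T := Nat.one_le_two_pow
  have hcard : (Finset.Icc 1 (ℓ - 1)).card = ℓ - 1 := by simp
  have hsplit : S = (∑ i ∈ Finset.Icc 1 (ℓ - 1), (2 ^ (s i) - 1)) + (ℓ - 1) := by
    rw [hSdef]
    rw [show (∑ i ∈ Finset.Icc 1 (ℓ - 1), 2 ^ (s i)) =
        ∑ i ∈ Finset.Icc 1 (ℓ - 1), ((2 ^ (s i) - 1) + 1) from
      Finset.sum_congr rfl fun i _ => (Nat.sub_add_cancel Nat.one_le_two_pow).symm]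
    rw [Finset.sum_add_distrib, Finset.sum_const, hcard, smul_eq_mul, mul_one]
  have hDlt : D < ∑ i ∈ Finset.Icc 1 (ℓ - 1), (2 ^ (s i) - 1) := by
    obtain ⟨i, hi, hine⟩ := hne
    exact Finset.sum_lt_sum hd ⟨i, hi, lt_of_le_of_ne (hd i hi) hine⟩
  have hDS : D + ℓ ≤ S := by omega
  have hSle : S ≤ 2 ^ ℓ := le_of_lt (Nat.lt_of_sub_pos (lt_of_lt_of_le hTpos hgap))
  have hST : T + S ≤ 2 ^ ℓ := (Nat.le_sub_iff_add_le hSle).mp hgap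
  have hmono' : ∀ i ∈ Finset.Icc 1 (ℓ - 1), 2 ^ (s i) - 1 ≤ T - 1 := by
    intro i hi
    rw [Finset.mem_Icc] at hi
    have h1 : s i ≤ s (ℓ - 1) := by
      apply hmono i (by rw [Finset.mem_Icc]; omega) (ℓ - 1)
        (by rw [Finset.mem_Icc]; omega) hi.2
    have := Nat.pow_le_pow_right (by norm_num : 1 ≤ 2) h1
    omega
  have hg1 : ganchor > 2 ^ ℓ - 1 - S := by omega
  refine ⟨hg1, by omega, hmono', ?_⟩
  intro i hi
  have h1 := hmono' i hi
  have h2 := hd i hi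
  omega
end

section
/- Let ℓ ≥ 3, and consider all length-ℓ non-decreasing integer sequences s with s(ℓ) = ℓ that are anchor-decodable. Then max_s ∑_i s(i) ≤ ℓ² − ℓ·log₂ℓ + log₂ℓ when ℓ is a power of 2, and this maximum is not attained: every sequence achieving ∑_i s(i) = ℓ² − ℓ·log₂ℓ + log₂ℓ must have s(i) = ℓ − log₂ℓ for all 1 ≤ i ≤ ℓ−1, which violates the cyclic-shift condition of anchor-decodability. -/
-- tangent line bound: 2^c * (x + 1 - c) ≤ 2^x over ℤ
lemma tangent (c x : ℕ) : (2:ℤ)^c * ((x:ℤ) + 1 - c) ≤ 2^x := by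
  rcases le_or_gt c x with h | h
  · have h1 : ((x:ℤ) + 1 - c) ≤ 2^(x - c) := by
      have h2 : (x - c : ℕ) < 2 ^ (x - c) := Nat.lt_two_pow_self
      have h3 : ((x - c : ℕ) : ℤ) < 2 ^ (x - c) := by exact_mod_cast h2
      have h4 : ((x - c : ℕ) : ℤ) = (x:ℤ) - c := by
        have := Nat.cast_sub (R := ℤ) h
        omega
      omega
    calc (2:ℤ)^c * ((x:ℤ) + 1 - c) ≤ 2^c * 2^(x-c) := by
          have : (0:ℤ) < 2^c := by positivity
          nlinarith
      _ = 2^x := by rw [← pow_add]; congr 1; omega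
  · have h1 : (x:ℤ) + 1 - c ≤ 0 := by
      have : (x:ℤ) < c := by exact_mod_cast h
      omega
    have h2 : (0:ℤ) < 2^c := by positivity
    have h3 : (0:ℤ) ≤ 2^x := by positivity
    nlinarith

-- main bound: Kraft sum bounded by 2^ℓ forces sum of s small
lemma sum_bound (ℓ m : ℕ) (hm : ℓ = 2 ^ m) (hℓ : 3 ≤ ℓ) (s : ℕ → ℕ)
    (hkraft : ∑ i ∈ Finset.Icc 1 (ℓ-1), 2^(s i) + 2^(s (ℓ-1)) ≤ 2^ℓ) :
    (∑ i ∈ Finset.Icc 1 (ℓ-1), (s i : ℤ)) + (s (ℓ-1) : ℤ) ≤ (ℓ:ℤ) * ((ℓ:ℤ) - m) := by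
  have hmℓ : m < ℓ := by rw [hm]; exact Nat.lt_two_pow_self
  set c : ℕ := ℓ - m with hc
  have hcℤ : (c:ℤ) = (ℓ:ℤ) - m := by
    have : ((ℓ - m : ℕ):ℤ) = (ℓ:ℤ) - m := by
      rw [Nat.cast_sub hmℓ.le]
    simpa [hc] using this
  have hpow : (2:ℤ)^ℓ = (ℓ:ℤ) * 2^c := by
    have : (2:ℕ)^ℓ = ℓ * 2^c := by
      rw [hm]; rw [← pow_add]; congr 1; omega
    exact_mod_cast this
  have hA : ∑ i ∈ Finset.Icc 1 (ℓ-1), (2:ℤ)^c * ((s i:ℤ) + 1 - c)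
      ≤ ∑ i ∈ Finset.Icc 1 (ℓ-1), (2:ℤ)^(s i) :=
    Finset.sum_le_sum fun i _ => tangent c (s i)
  have hB : (2:ℤ)^c * ((s (ℓ-1):ℤ) + 1 - c) ≤ 2^(s (ℓ-1)) := tangent c _
  have hK : (∑ i ∈ Finset.Icc 1 (ℓ-1), (2:ℤ)^(s i)) + 2^(s (ℓ-1)) ≤ 2^ℓ := by
    exact_mod_cast hkraft
  have hcard : ((Finset.Icc 1 (ℓ-1)).card : ℤ) = (ℓ:ℤ) - 1 := by
    rw [Nat.card_Icc]; push_cast; omega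
  have hsum : ∑ i ∈ Finset.Icc 1 (ℓ-1), (2:ℤ)^c * ((s i:ℤ) + 1 - c)
      = (2:ℤ)^c * ((∑ i ∈ Finset.Icc 1 (ℓ-1), (s i:ℤ)) + ((ℓ:ℤ) - 1) * (1 - c)) := by
    rw [← Finset.mul_sum]
    congr 1
    have : ∀ i ∈ Finset.Icc 1 (ℓ-1), ((s i:ℤ) + 1 - c) = (s i:ℤ) + (1 - c) := by
      intro i _; ring
    rw [Finset.sum_congr rfl this, Finset.sum_add_distrib, Finset.sum_const, ← hcard]
    ring
  have hmain : (2:ℤ)^c * ((∑ i ∈ Finset.Icc 1 (ℓ-1), (s i:ℤ)) + ((ℓ:ℤ) - 1) * (1 - c)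
      + ((s (ℓ-1):ℤ) + 1 - c)) ≤ (ℓ:ℤ) * 2^c := by
    rw [mul_add, ← hsum, ← hpow]
    exact le_trans (add_le_add hA hB) hK
  have h2c : (0:ℤ) < 2^c := by positivity
  have := (mul_le_mul_iff_of_pos_left h2c).mp (by
    calc (2:ℤ)^c * ((∑ i ∈ Finset.Icc 1 (ℓ-1), (s i:ℤ)) + ((ℓ:ℤ) - 1) * (1 - c)
        + ((s (ℓ-1):ℤ) + 1 - c)) ≤ (ℓ:ℤ) * 2^c := hmain
      _ = 2^c * ℓ := by ring)
  rw [hcℤ] at this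
  nlinarith [this]

-- from the nat-subtraction hypothesis, get the additive Kraft inequality
lemma kraft_of_hyp (ℓ : ℕ) (s : ℕ → ℕ)
    (h : 2 ^ (s (ℓ - 1)) ≤ 2 ^ ℓ - ∑ i ∈ Finset.Icc 1 (ℓ - 1), 2 ^ (s i)) :
    ∑ i ∈ Finset.Icc 1 (ℓ-1), 2^(s i) + 2^(s (ℓ-1)) ≤ 2^ℓ := by
  have hpos : 0 < 2 ^ (s (ℓ - 1)) := Nat.pow_pos (by norm_num)
  omega

-- split the sum over Icc 1 ℓ
lemma sum_split (ℓ : ℕ) (hℓ : 1 ≤ ℓ) (s : ℕ → ℕ) :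
    ∑ i ∈ Finset.Icc 1 ℓ, s i = ∑ i ∈ Finset.Icc 1 (ℓ-1), s i + s ℓ := by
  have h1 : ℓ - 1 + 1 = ℓ := by omega
  conv_lhs => rw [← h1]
  rw [Finset.sum_Icc_succ_top (by omega), h1]

-- equality case: sum equal to bound forces s constant = ℓ - m on Icc 1 (ℓ-1)
lemma eq_case (ℓ m : ℕ) (hm : ℓ = 2 ^ m) (hℓ : 3 ≤ ℓ) (s : ℕ → ℕ)
    (hmono : ∀ i ∈ Finset.Icc 1 ℓ, ∀ j ∈ Finset.Icc 1 ℓ, i ≤ j → s i ≤ s j)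
    (hsl : s ℓ = ℓ)
    (hk : 2 ^ (s (ℓ - 1)) ≤ 2 ^ ℓ - ∑ i ∈ Finset.Icc 1 (ℓ - 1), 2 ^ (s i))
    (hsum : ∑ i ∈ Finset.Icc 1 ℓ, s i = ℓ ^ 2 - ℓ * m + m) :
    ∀ i ∈ Finset.Icc 1 (ℓ - 1), s i = ℓ - m := by
  have hmℓ : m < ℓ := by rw [hm]; exact Nat.lt_two_pow_self
  have hbound := sum_bound ℓ m hm hℓ s (kraft_of_hyp ℓ s hk)
  set T : ℕ := ∑ i ∈ Finset.Icc 1 (ℓ-1), s i with hT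
  have hTℤ : (T:ℤ) = ∑ i ∈ Finset.Icc 1 (ℓ-1), (s i : ℤ) := by push_cast [hT]; rfl
  -- turn hsum into exact value of T in ℤ
  have hmul : ℓ * m ≤ ℓ ^ 2 := by
    have : ℓ * m ≤ ℓ * ℓ := Nat.mul_le_mul_left ℓ hmℓ.le
    nlinarith
  have hTval : (T:ℤ) = ((ℓ:ℤ) - 1) * ((ℓ:ℤ) - m) := by
    have h1 : T + ℓ = ℓ ^ 2 - ℓ * m + m := by
      have hs := sum_split ℓ (by omega) s
      rw [hsum, hsl] at hs
      exact hs.symm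
    have h2 : (T:ℤ) + ℓ = (ℓ:ℤ)^2 - (ℓ:ℤ) * m + m := by
      have := congrArg (Nat.cast : ℕ → ℤ) h1
      push_cast [Nat.cast_sub hmul] at this
      linarith [this]
    ring_nf
    ring_nf at h2
    linarith
  -- s (ℓ-1) ≤ ℓ - m
  have hsl1 : (s (ℓ-1) : ℤ) ≤ (ℓ:ℤ) - m := by
    rw [← hTℤ] at hbound
    rw [hTval] at hbound
    nlinarith
  have hsl1' : s (ℓ-1) ≤ ℓ - m := by omega
  -- each s i ≤ ℓ - m
  have hle : ∀ i ∈ Finset.Icc 1 (ℓ-1), s i ≤ ℓ - m := by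
    intro i hi
    rw [Finset.mem_Icc] at hi
    have := hmono i (by rw [Finset.mem_Icc]; omega) (ℓ-1) (by rw [Finset.mem_Icc]; omega) (by omega)
    omega
  -- T = (ℓ-1) * (ℓ-m) in ℕ
  have hTnat : T = (ℓ - 1) * (ℓ - m) := by
    have : ((ℓ - 1 : ℕ):ℤ) * ((ℓ - m : ℕ):ℤ) = ((ℓ:ℤ) - 1) * ((ℓ:ℤ) - m) := by
      rw [Nat.cast_sub (by omega), Nat.cast_sub hmℓ.le]
      push_cast; ring
    have h2 : (T:ℤ) = ((ℓ-1:ℕ):ℤ) * ((ℓ-m:ℕ):ℤ) := by rw [hTval, this]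
    exact_mod_cast h2
  -- finish: all equal
  intro i hi
  by_contra hne
  have hlt : s i < ℓ - m := lt_of_le_of_ne (hle i hi) hne
  have : T < ∑ _j ∈ Finset.Icc 1 (ℓ-1), (ℓ - m) :=
    Finset.sum_lt_sum hle ⟨i, hi, hlt⟩
  rw [Finset.sum_const, Nat.card_Icc, smul_eq_mul, Nat.add_sub_cancel] at this
  omega

-- constant s violates cyclic shift condition
lemma not_anchor (ℓ m : ℕ) (hm : ℓ = 2 ^ m) (hℓ : 3 ≤ ℓ) (s : ℕ → ℕ)
    (hconst : ∀ i ∈ Finset.Icc 1 (ℓ - 1), s i = ℓ - m) :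
    ¬ AnchorDecodable ℓ s := by
  have hmℓ : m < ℓ := by rw [hm]; exact Nat.lt_two_pow_self
  rintro ⟨-, -, -, hshift⟩
  obtain ⟨k, hk, hne⟩ := hshift 1 one_pos (by omega)
  apply hne
  have hconstγ : ∀ j, j < ℓ → gammaVec ℓ s j = 2^(ℓ-m) - 1 := by
    intro j hj
    rcases Nat.eq_zero_or_pos j with rfl | hj0
    · have hsum : ∑ i ∈ Finset.Icc 1 (ℓ-1), 2^(s i) = (ℓ - 1) * 2^(ℓ-m) := by
        rw [Finset.sum_congr rfl fun i hi => by rw [hconst i hi]]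
        rw [Finset.sum_const, Nat.card_Icc, smul_eq_mul, Nat.add_sub_cancel]
      have h2ℓ : (2:ℕ)^ℓ = ℓ * 2^(ℓ-m) := by
        rw [hm, ← pow_add]; congr 1; omega
      have hA : 1 ≤ 2^(ℓ-m) := Nat.one_le_two_pow
      have hg : gammaVec ℓ s 0 = 2 ^ ℓ - 1 - ∑ i ∈ Finset.Icc 1 (ℓ-1), 2 ^ (s i) := by
        simp [gammaVec]
      rw [hg, hsum, h2ℓ]
      have h1 : (ℓ - 1) * 2^(ℓ-m) = ℓ * 2^(ℓ-m) - 2^(ℓ-m) := by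
        rw [Nat.sub_mul, one_mul]
      have h2 : 2^(ℓ-m) ≤ ℓ * 2^(ℓ-m) := Nat.le_mul_of_pos_left _ (by omega)
      omega
    · simp only [gammaVec, if_neg (by omega : j ≠ 0)]
      rw [hconst (ℓ - j) (by rw [Finset.mem_Icc]; omega)]
  rw [hconstγ _ (Nat.mod_lt _ (by omega)), hconstγ _ hk]

theorem stmt9 (ℓ : ℕ) (hℓ : 3 ≤ ℓ) (hpow : ∃ m : ℕ, ℓ = 2 ^ m) :
    (∀ s : ℕ → ℕ, AnchorDecodable ℓ s →
      ∑ i ∈ Finset.Icc 1 ℓ, s i < ℓ ^ 2 - ℓ * Nat.log 2 ℓ + Nat.log 2 ℓ) ∧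
    (∀ s : ℕ → ℕ,
      (∀ i ∈ Finset.Icc 1 ℓ, ∀ j ∈ Finset.Icc 1 ℓ, i ≤ j → s i ≤ s j) →
      s ℓ = ℓ →
      2 ^ (s (ℓ - 1)) ≤ 2 ^ ℓ - ∑ i ∈ Finset.Icc 1 (ℓ - 1), 2 ^ (s i) →
      ∑ i ∈ Finset.Icc 1 ℓ, s i = ℓ ^ 2 - ℓ * Nat.log 2 ℓ + Nat.log 2 ℓ →
      ((∀ i ∈ Finset.Icc 1 (ℓ - 1), s i = ℓ - Nat.log 2 ℓ) ∧
        ¬ AnchorDecodable ℓ s)) := by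
  obtain ⟨m, hm⟩ := hpow
  have hlog : Nat.log 2 ℓ = m := by rw [hm, Nat.log_pow (by norm_num)]
  have hmℓ : m < ℓ := by rw [hm]; exact Nat.lt_two_pow_self
  have hid : (ℓ-1)*(ℓ-m) + ℓ = ℓ^2 - ℓ*m + m := by
    have hmul : ℓ * m ≤ ℓ ^ 2 := by nlinarith [hmℓ.le]
    zify [hmul, hmℓ.le, show 1 ≤ ℓ by omega]
    ring
  constructor
  · intro s hAD
    obtain ⟨hmono, hsl, hk, -⟩ := id hAD
    rw [hlog]
    have hbound := sum_bound ℓ m hm hℓ s (kraft_of_hyp ℓ s hk)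
    set T : ℕ := ∑ i ∈ Finset.Icc 1 (ℓ-1), s i with hT
    have hTℤ : (T:ℤ) = ∑ i ∈ Finset.Icc 1 (ℓ-1), (s i : ℤ) := by push_cast [hT]; rfl
    have hB : T ≤ (ℓ - 1) * s (ℓ-1) := by
      have := Finset.sum_le_card_nsmul (Finset.Icc 1 (ℓ-1)) s (s (ℓ-1)) (fun i hi => by
        rw [Finset.mem_Icc] at hi
        exact hmono i (by rw [Finset.mem_Icc]; omega) (ℓ-1)
          (by rw [Finset.mem_Icc]; omega) (by omega))
      rw [Nat.card_Icc, smul_eq_mul, Nat.add_sub_cancel] at this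
      exact this
    have hBℤ : (T:ℤ) ≤ ((ℓ:ℤ)-1) * (s (ℓ-1):ℤ) := by
      zify [show 1 ≤ ℓ by omega] at hB
      exact hB
    rw [← hTℤ] at hbound
    have hTle : (T:ℤ) ≤ ((ℓ:ℤ)-1) * ((ℓ:ℤ)-(m:ℤ)) := by
      have hl0 : (0:ℤ) < (ℓ:ℤ) := by exact_mod_cast (by omega : 0 < ℓ)
      have h2 := mul_le_mul_of_nonneg_left hbound (by linarith : (0:ℤ) ≤ (ℓ:ℤ)-1)
      nlinarith [h2, hBℤ]
    have hTleN : T ≤ (ℓ-1) * (ℓ-m) := by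
      zify [show 1 ≤ ℓ by omega, hmℓ.le]
      exact hTle
    have hsplit := sum_split ℓ (by omega) s
    have hne : T ≠ (ℓ-1)*(ℓ-m) := by
      intro heq
      have hsum : ∑ i ∈ Finset.Icc 1 ℓ, s i = ℓ^2 - ℓ*m + m := by
        rw [hsplit, hsl, ← hT, heq, hid]
      exact not_anchor ℓ m hm hℓ s (eq_case ℓ m hm hℓ s hmono hsl hk hsum) hAD
    rw [hsplit, hsl, ← hT, ← hid]
    omega
  · intro s hmono hsl hk hsum
    rw [hlog] at hsum ⊢
    have hconst := eq_case ℓ m hm hℓ s hmono hsl hk hsum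
    exact ⟨hconst, not_anchor ℓ m hm hℓ s hconst⟩
end

section
/- If c is a codeword of C[ℓ] (the image of the gap encoder φ with anchor-decodable characteristic sequence f_ℓ on {0,1}^{k_ℓ}), then every cyclic shift of c by n₀ ∈ ℤ_{2^ℓ} is also a codeword of C[ℓ], and the 2^ℓ cyclic shifts of c are pairwise distinct. Consequently k_ℓ ≤ ℓ + ⌊log₂ p(2^ℓ, ℓ)⌋ where p(n,w) is the number of primitive binary necklaces of length n and weight w. -/
/-- The characteristic sequence f_ℓ. -/
def fl (ℓ i : ℕ) : ℕ :=
  if i = ℓ then ℓ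
  else if 2 ^ Nat.log 2 ℓ = ℓ then
    (if i = 1 then ℓ - Nat.log 2 ℓ - 1 else ℓ - Nat.log 2 ℓ)
  else if i ≤ ℓ - (2 ^ Nat.clog 2 ℓ - ℓ) then ℓ - Nat.clog 2 ℓ
  else ℓ - Nat.log 2 ℓ

lemma st18_pow_log_le {ℓ : ℕ} (hℓ : 3 ≤ ℓ) : 2 ^ Nat.log 2 ℓ ≤ ℓ :=
  Nat.pow_log_le_self 2 (by omega)

lemma st18_lt_pow_succ (ℓ : ℕ) : ℓ < 2 ^ (Nat.log 2 ℓ + 1) :=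
  Nat.lt_pow_succ_log_self (by norm_num) ℓ

lemma st18_one_le_k {ℓ : ℕ} (hℓ : 3 ≤ ℓ) : 1 ≤ Nat.log 2 ℓ :=
  (Nat.le_log_iff_pow_le (by norm_num) (show ℓ ≠ 0 by omega)).mpr (show 2 ^ 1 ≤ ℓ by omega)

lemma st18_k_add_two_le {ℓ : ℕ} (hℓ : 3 ≤ ℓ) : Nat.log 2 ℓ + 2 ≤ ℓ := by
  set k := Nat.log 2 ℓ with hk
  have h1 : 1 ≤ k := st18_one_le_k hℓ
  have h2 : 2 ^ k ≤ ℓ := st18_pow_log_le hℓ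
  rcases Nat.lt_or_ge k 2 with h | h
  · omega
  · have h3 : 2 ^ k = 2 * 2 ^ (k-1) := by
      rw [← pow_succ']
      congr 1
      omega
    have h4 := Nat.lt_two_pow_self (n := k-1)
    omega

lemma st18_fl_last (ℓ : ℕ) : fl ℓ ℓ = ℓ := by simp [fl]

lemma st18_clog_np {ℓ : ℕ} (hℓ : 3 ≤ ℓ) (hp : 2 ^ Nat.log 2 ℓ ≠ ℓ) :
    Nat.clog 2 ℓ = Nat.log 2 ℓ + 1 := by
  have h1 : 2 ^ Nat.log 2 ℓ < ℓ := lt_of_le_of_ne (st18_pow_log_le hℓ) hp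
  have h2 : ℓ ≤ 2 ^ (Nat.log 2 ℓ + 1) := (st18_lt_pow_succ ℓ).le
  have hle : Nat.clog 2 ℓ ≤ Nat.log 2 ℓ + 1 := (Nat.clog_le_iff_le_pow (by norm_num)).mpr h2
  have hge : Nat.log 2 ℓ < Nat.clog 2 ℓ := (Nat.lt_clog_iff_pow_lt (by norm_num)).mpr h1
  omega

lemma st18_fl_pow_one {ℓ : ℕ} (hℓ : 3 ≤ ℓ) (hp : 2 ^ Nat.log 2 ℓ = ℓ) :
    fl ℓ 1 = ℓ - Nat.log 2 ℓ - 1 := by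
  have h : (1:ℕ) ≠ ℓ := by omega
  simp [fl, h, hp]

lemma st18_fl_pow_mid {ℓ : ℕ} (hℓ : 3 ≤ ℓ) (hp : 2 ^ Nat.log 2 ℓ = ℓ) {i : ℕ} (h2 : 2 ≤ i)
    (hi : i ≤ ℓ - 1) : fl ℓ i = ℓ - Nat.log 2 ℓ := by
  have h1 : i ≠ ℓ := by omega
  have h3 : i ≠ 1 := by omega
  simp [fl, h1, h3, hp]

lemma st18_fl_np_small {ℓ : ℕ} (hℓ : 3 ≤ ℓ) (hp : 2 ^ Nat.log 2 ℓ ≠ ℓ) {i : ℕ} (h1 : 1 ≤ i)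
    (hi : i ≤ 2 * ℓ - 2 ^ (Nat.log 2 ℓ + 1)) : fl ℓ i = ℓ - Nat.log 2 ℓ - 1 := by
  have hc := st18_clog_np hℓ hp
  have hlt : 2 ^ Nat.log 2 ℓ < ℓ := lt_of_le_of_ne (st18_pow_log_le hℓ) hp
  have hub : ℓ < 2 ^ (Nat.log 2 ℓ + 1) := st18_lt_pow_succ ℓ
  have hpow : 2 ^ (Nat.log 2 ℓ + 1) = 2 * 2 ^ Nat.log 2 ℓ := by ring
  have hiℓ : i ≠ ℓ := by omega
  have hcond : i ≤ ℓ - (2 ^ (Nat.log 2 ℓ + 1) - ℓ) := by omega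
  simp [fl, hiℓ, hp, hcond, hc]
  omega

lemma st18_fl_np_big {ℓ : ℕ} (hℓ : 3 ≤ ℓ) (hp : 2 ^ Nat.log 2 ℓ ≠ ℓ) {i : ℕ}
    (h1 : 2 * ℓ - 2 ^ (Nat.log 2 ℓ + 1) < i) (hi : i ≤ ℓ - 1) :
    fl ℓ i = ℓ - Nat.log 2 ℓ := by
  have hc := st18_clog_np hℓ hp
  have hlt : 2 ^ Nat.log 2 ℓ < ℓ := lt_of_le_of_ne (st18_pow_log_le hℓ) hp
  have hub : ℓ < 2 ^ (Nat.log 2 ℓ + 1) := st18_lt_pow_succ ℓ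
  have hpow : 2 ^ (Nat.log 2 ℓ + 1) = 2 * 2 ^ Nat.log 2 ℓ := by ring
  have hiℓ : i ≠ ℓ := by omega
  have hcond : ¬ (i ≤ ℓ - (2 ^ (Nat.log 2 ℓ + 1) - ℓ)) := by omega
  simp [fl, hiℓ, hp, hcond, hc]

lemma st18_fl_le {ℓ : ℕ} (hℓ : 3 ≤ ℓ) {i : ℕ} (h1 : 1 ≤ i) (hi : i ≤ ℓ - 1) :
    fl ℓ i ≤ ℓ - Nat.log 2 ℓ := by
  by_cases hp : 2 ^ Nat.log 2 ℓ = ℓ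
  · rcases Nat.lt_or_ge i 2 with h | h
    · have hi1 : i = 1 := by omega
      rw [hi1, st18_fl_pow_one hℓ hp]; omega
    · rw [st18_fl_pow_mid hℓ hp h hi]
  · rcases le_or_gt i (2 * ℓ - 2 ^ (Nat.log 2 ℓ + 1)) with h | h
    · rw [st18_fl_np_small hℓ hp h1 h]; omega
    · rw [st18_fl_np_big hℓ hp h hi]

def glt (ℓ j : ℕ) (d : ℕ → ℕ) : ℕ := ∑ i ∈ Finset.Ico j ℓ, (1 + d i)

def Vd (ℓ : ℕ) (d : ℕ → ℕ) : Prop := ∀ i ∈ Finset.Icc 1 ℓ, d i < 2 ^ fl ℓ i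

lemma st18_icc_eq {ℓ : ℕ} (hℓ : 1 ≤ ℓ) (j : ℕ) : Finset.Icc j (ℓ-1) = Finset.Ico j ℓ := by
  ext x; simp only [Finset.mem_Icc, Finset.mem_Ico]; omega

lemma st18_glt_split {ℓ : ℕ} (d : ℕ → ℕ) {j j' : ℕ} (h : j ≤ j') (h2 : j' ≤ ℓ) :
    glt ℓ j d = (∑ i ∈ Finset.Ico j j', (1 + d i)) + glt ℓ j' d :=
  (Finset.sum_Ico_consecutive _ h h2).symm

lemma st18_glt_anti {ℓ : ℕ} (d : ℕ → ℕ) {j j' : ℕ} (h : j ≤ j') (h2 : j' ≤ ℓ) :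
    glt ℓ j' d + (j' - j) ≤ glt ℓ j d := by
  rw [st18_glt_split d h h2]
  have h3 : j' - j ≤ ∑ i ∈ Finset.Ico j j', (1 + d i) := by
    calc j' - j = ∑ _i ∈ Finset.Ico j j', 1 := by simp
    _ ≤ _ := Finset.sum_le_sum (fun i _ => by omega)
  omega

lemma st18_glt_step {ℓ : ℕ} (d : ℕ → ℕ) {j : ℕ} (h : j < ℓ) :
    glt ℓ j d = 1 + d j + glt ℓ (j+1) d := by
  unfold glt; rw [Finset.sum_eq_sum_Ico_succ_bot h]

lemma st18_glt_last {ℓ : ℕ} (d : ℕ → ℕ) : glt ℓ ℓ d = 0 := by simp [glt]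

lemma st18_sum_pow_np {ℓ : ℕ} (hℓ : 3 ≤ ℓ) (hp : 2 ^ Nat.log 2 ℓ ≠ ℓ) :
    (∑ i ∈ Finset.Ico 1 ℓ, 2 ^ fl ℓ i) + 2 ^ (ℓ - Nat.log 2 ℓ) = 2 ^ ℓ := by
  obtain ⟨k, hk⟩ : ∃ k, Nat.log 2 ℓ = k := ⟨_, rfl⟩
  have hk2 : k + 2 ≤ ℓ := hk ▸ st18_k_add_two_le hℓ
  have hlt : 2 ^ k < ℓ := hk ▸ lt_of_le_of_ne (st18_pow_log_le hℓ) hp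
  have hub : ℓ < 2 ^ (k + 1) := hk ▸ st18_lt_pow_succ ℓ
  have hpow : (2:ℕ) ^ (k + 1) = 2 * 2 ^ k := by ring
  obtain ⟨a, ha⟩ : ∃ a, 2 * ℓ - 2 ^ (k+1) = a := ⟨_, rfl⟩
  have ha1 : 1 ≤ a := by omega
  have ha2 : a ≤ ℓ - 1 := by omega
  have hsplit : (∑ i ∈ Finset.Ico 1 (a+1), 2 ^ fl ℓ i)
      + (∑ i ∈ Finset.Ico (a+1) ℓ, 2 ^ fl ℓ i) = ∑ i ∈ Finset.Ico 1 ℓ, 2 ^ fl ℓ i :=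
    Finset.sum_Ico_consecutive _ (by omega) (by omega)
  have h1 : (∑ i ∈ Finset.Ico 1 (a+1), 2 ^ fl ℓ i) = a * 2 ^ (ℓ - k - 1) := by
    have hc : (∑ i ∈ Finset.Ico 1 (a+1), 2 ^ fl ℓ i)
        = ∑ _i ∈ Finset.Ico 1 (a+1), 2 ^ (ℓ - k - 1) :=
      Finset.sum_congr rfl (fun i hi => by
        rw [Finset.mem_Ico] at hi
        rw [st18_fl_np_small hℓ hp hi.1 (by rw [hk]; omega), hk])
    rw [hc, Finset.sum_const, Nat.card_Ico, smul_eq_mul]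
    simp
  have h2 : (∑ i ∈ Finset.Ico (a+1) ℓ, 2 ^ fl ℓ i) = (ℓ - a - 1) * 2 ^ (ℓ - k) := by
    have hc : (∑ i ∈ Finset.Ico (a+1) ℓ, 2 ^ fl ℓ i)
        = ∑ _i ∈ Finset.Ico (a+1) ℓ, 2 ^ (ℓ - k) :=
      Finset.sum_congr rfl (fun i hi => by
        rw [Finset.mem_Ico] at hi
        rw [st18_fl_np_big hℓ hp (by rw [hk]; omega) (by omega), hk])
    rw [hc, Finset.sum_const, Nat.card_Ico, smul_eq_mul, Nat.sub_sub]
  have hu : (2:ℕ) ^ (ℓ - k) = 2 * 2 ^ (ℓ - k - 1) := by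
    rw [← pow_succ']; congr 1; omega
  have hE : (2:ℕ) ^ ℓ = 2 ^ (k+1) * 2 ^ (ℓ - k - 1) := by
    rw [← pow_add]; congr 1; omega
  have hcoef : a + (ℓ - a - 1) * 2 + 2 = 2 ^ (k+1) := by omega
  rw [← hsplit, h1, h2, hk, hu, hE, ← hcoef]
  ring

lemma st18_sum_pow_pow {ℓ : ℕ} (hℓ : 3 ≤ ℓ) (hp : 2 ^ Nat.log 2 ℓ = ℓ) :
    (∑ i ∈ Finset.Ico 1 ℓ, 2 ^ fl ℓ i) + 3 * 2 ^ (ℓ - Nat.log 2 ℓ - 1) = 2 ^ ℓ := by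
  obtain ⟨k, hk⟩ : ∃ k, Nat.log 2 ℓ = k := ⟨_, rfl⟩
  have hk2 : k + 2 ≤ ℓ := hk ▸ st18_k_add_two_le hℓ
  have hsplit : (∑ i ∈ Finset.Ico 1 ℓ, 2 ^ fl ℓ i)
      = 2 ^ fl ℓ 1 + ∑ i ∈ Finset.Ico 2 ℓ, 2 ^ fl ℓ i :=
    Finset.sum_eq_sum_Ico_succ_bot (by omega) _
  have h2 : (∑ i ∈ Finset.Ico 2 ℓ, 2 ^ fl ℓ i) = (ℓ - 2) * 2 ^ (ℓ - k) := by
    have hc : (∑ i ∈ Finset.Ico 2 ℓ, 2 ^ fl ℓ i)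
        = ∑ _i ∈ Finset.Ico 2 ℓ, 2 ^ (ℓ - k) :=
      Finset.sum_congr rfl (fun i hi => by
        rw [Finset.mem_Ico] at hi
        rw [st18_fl_pow_mid hℓ hp hi.1 (by omega), hk])
    rw [hc, Finset.sum_const, Nat.card_Ico, smul_eq_mul]
  have hu : (2:ℕ) ^ (ℓ - k) = 2 * 2 ^ (ℓ - k - 1) := by
    rw [← pow_succ']; congr 1; omega
  have hE : (2:ℕ) ^ ℓ = 2 ^ k * 2 ^ (ℓ - k) := by
    rw [← pow_add]; congr 1; omega
  have hpk : (2:ℕ) ^ k = ℓ := by rw [← hk]; exact hp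
  have hcoef : 1 + (ℓ - 2) * 2 + 3 = 2 * ℓ := by omega
  rw [hsplit, st18_fl_pow_one hℓ hp, h2, hE, hpk, hu, hk]
  calc 2 ^ (ℓ - k - 1) + (ℓ - 2) * (2 * 2 ^ (ℓ - k - 1)) + 3 * 2 ^ (ℓ - k - 1)
      = (1 + (ℓ - 2) * 2 + 3) * 2 ^ (ℓ - k - 1) := by ring
    _ = (2 * ℓ) * 2 ^ (ℓ - k - 1) := by rw [hcoef]
    _ = ℓ * (2 * 2 ^ (ℓ - k - 1)) := by ring

lemma st18_T_le_sum {ℓ : ℕ} {d : ℕ → ℕ} (hℓ : 3 ≤ ℓ) (hv : Vd ℓ d) :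
    glt ℓ 1 d ≤ ∑ i ∈ Finset.Ico 1 ℓ, 2 ^ fl ℓ i := by
  apply Finset.sum_le_sum
  intro i hi
  rw [Finset.mem_Ico] at hi
  have := hv i (Finset.mem_Icc.mpr ⟨hi.1, by omega⟩)
  omega

lemma st18_T_bound {ℓ : ℕ} {d : ℕ → ℕ} (hℓ : 3 ≤ ℓ) (hv : Vd ℓ d) :
    glt ℓ 1 d + 2 ^ (ℓ - Nat.log 2 ℓ) ≤ 2 ^ ℓ := by
  have h := st18_T_le_sum hℓ hv
  by_cases hp : 2 ^ Nat.log 2 ℓ = ℓ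
  · have h2 := st18_sum_pow_pow hℓ hp
    have hu : 2 ^ (ℓ - Nat.log 2 ℓ) = 2 * 2 ^ (ℓ - Nat.log 2 ℓ - 1) := by
      rw [← pow_succ']; congr 1
      have := st18_k_add_two_le hℓ
      omega
    omega
  · have h2 := st18_sum_pow_np hℓ hp
    omega

lemma st18_T_bound_pow {ℓ : ℕ} {d : ℕ → ℕ} (hℓ : 3 ≤ ℓ) (hp : 2 ^ Nat.log 2 ℓ = ℓ)
    (hv : Vd ℓ d) :
    glt ℓ 1 d + 2 ^ (ℓ - Nat.log 2 ℓ) + 2 ^ (ℓ - Nat.log 2 ℓ - 1) ≤ 2 ^ ℓ := by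
  have h := st18_T_le_sum hℓ hv
  have h2 := st18_sum_pow_pow hℓ hp
  have hu : 2 ^ (ℓ - Nat.log 2 ℓ) = 2 * 2 ^ (ℓ - Nat.log 2 ℓ - 1) := by
    rw [← pow_succ']; congr 1
    have := st18_k_add_two_le hℓ
    omega
  omega

lemma st18_T_max_np {ℓ : ℕ} {d : ℕ → ℕ} (hℓ : 3 ≤ ℓ) (hp : 2 ^ Nat.log 2 ℓ ≠ ℓ)
    (hv : Vd ℓ d) (hT : glt ℓ 1 d + 2 ^ (ℓ - Nat.log 2 ℓ) = 2 ^ ℓ) :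
    ∀ i, 1 ≤ i → i ≤ ℓ - 1 → 1 + d i = 2 ^ fl ℓ i := by
  intro i h1 h2
  by_contra hne
  have hle : d i < 2 ^ fl ℓ i := hv i (Finset.mem_Icc.mpr ⟨h1, by omega⟩)
  have hlt : 1 + d i < 2 ^ fl ℓ i := by omega
  have hstrict : glt ℓ 1 d < ∑ i ∈ Finset.Ico 1 ℓ, 2 ^ fl ℓ i := by
    apply Finset.sum_lt_sum
    · intro i hi
      rw [Finset.mem_Ico] at hi
      have := hv i (Finset.mem_Icc.mpr ⟨hi.1, by omega⟩)
      omega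
    · exact ⟨i, Finset.mem_Ico.mpr ⟨h1, by omega⟩, hlt⟩
  have h3 := st18_sum_pow_np hℓ hp
  omega

def st18_pos (ℓ : ℕ) (d : ℕ → ℕ) (j : ℕ) : ZMod (2^ℓ) :=
  ((d ℓ + glt ℓ j d : ℕ) : ZMod (2^ℓ))

lemma st18_mem_iff {ℓ : ℕ} (hℓ : 1 ≤ ℓ) (d : ℕ → ℕ) (z : ZMod (2^ℓ)) :
    gapEncode ℓ d z = true ↔ ∃ j, 1 ≤ j ∧ j ≤ ℓ ∧ z = st18_pos ℓ d j := by
  unfold gapEncode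
  simp only [decide_eq_true_eq]
  constructor
  · rintro ⟨j, hj, h⟩
    rw [Finset.mem_Icc] at hj
    refine ⟨j, hj.1, hj.2, ?_⟩
    rw [h]
    unfold st18_pos glt
    rw [st18_icc_eq hℓ]
  · rintro ⟨j, h1, h2, h⟩
    refine ⟨j, Finset.mem_Icc.mpr ⟨h1, h2⟩, ?_⟩
    rw [h]
    unfold st18_pos glt
    rw [st18_icc_eq hℓ]

lemma st18_cast_inj {n a b : ℕ} (ha : a < n) (hb : b < n) (h : (a : ZMod n) = b) : a = b := by
  haveI : NeZero n := ⟨by omega⟩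
  calc a = ((a : ℕ) : ZMod n).val := (ZMod.val_cast_of_lt ha).symm
  _ = ((b : ℕ) : ZMod n).val := by rw [h]
  _ = b := ZMod.val_cast_of_lt hb

lemma st18_Tlt {ℓ : ℕ} {d : ℕ → ℕ} (hℓ : 3 ≤ ℓ) (hv : Vd ℓ d) : glt ℓ 1 d < 2 ^ ℓ := by
  have h := st18_T_bound hℓ hv
  have h2 : 0 < 2 ^ (ℓ - Nat.log 2 ℓ) := Nat.pow_pos (by norm_num)
  omega

lemma st18_pos_eq {ℓ : ℕ} {d : ℕ → ℕ} (hT : glt ℓ 1 d < 2 ^ ℓ) {j j' : ℕ}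
    (h1 : 1 ≤ j) (hj : j ≤ ℓ) (h1' : 1 ≤ j') (hj' : j' ≤ ℓ)
    (h : st18_pos ℓ d j = st18_pos ℓ d j') : j = j' := by
  have hmod : (d ℓ + glt ℓ j d) ≡ (d ℓ + glt ℓ j' d) [MOD 2^ℓ] :=
    (ZMod.natCast_eq_natCast_iff _ _ _).mp h
  have hmod2 : glt ℓ j d ≡ glt ℓ j' d [MOD 2^ℓ] := hmod.add_left_cancel' _
  have hb : glt ℓ j d + (j - 1) ≤ glt ℓ 1 d := st18_glt_anti d h1 hj
  have hb' : glt ℓ j' d + (j' - 1) ≤ glt ℓ 1 d := st18_glt_anti d h1' hj'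
  have heq : glt ℓ j d = glt ℓ j' d := by
    have e1 : glt ℓ j d % 2^ℓ = glt ℓ j' d % 2^ℓ := hmod2
    rw [Nat.mod_eq_of_lt (by omega), Nat.mod_eq_of_lt (by omega)] at e1
    exact e1
  by_contra hne
  rcases Nat.lt_or_ge j j' with hlt | hge
  · have := st18_glt_anti d (le_of_lt hlt) hj'
    omega
  · have hlt : j' < j := by omega
    have := st18_glt_anti d (le_of_lt hlt) hj
    omega

def st18_isGap (ℓ : ℕ) (c : ZMod (2^ℓ) → Bool) (z : ZMod (2^ℓ)) (r : ℕ) : Prop :=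
  0 < r ∧ c (z + (r : ℕ)) = true ∧ ∀ s : ℕ, 0 < s → s < r → c (z + (s : ℕ)) = false

lemma st18_isGap_unique {ℓ : ℕ} {c : ZMod (2^ℓ) → Bool} {z : ZMod (2^ℓ)} {r r' : ℕ}
    (h : st18_isGap ℓ c z r) (h' : st18_isGap ℓ c z r') : r = r' := by
  by_contra hne
  rcases Nat.lt_or_ge r r' with hlt | hge
  · have hf := h'.2.2 r h.1 hlt
    rw [h.2.1] at hf
    simp at hf
  · have hlt : r' < r := by omega
    have hf := h.2.2 r' h'.1 hlt
    rw [h'.2.1] at hf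
    simp at hf

lemma st18_pos_succ {ℓ : ℕ} (d : ℕ → ℕ) {j : ℕ} (h2 : 2 ≤ j) (hj : j ≤ ℓ) :
    st18_pos ℓ d (j-1) = st18_pos ℓ d j + ((glt ℓ (j-1) d - glt ℓ j d : ℕ) : ZMod (2^ℓ)) := by
  have hle : glt ℓ j d + 1 ≤ glt ℓ (j-1) d := by
    have := st18_glt_anti d (show j - 1 ≤ j by omega) hj
    omega
  unfold st18_pos
  rw [← Nat.cast_add]
  congr 1
  omega

lemma st18_pos_wrap {ℓ : ℕ} (d : ℕ → ℕ) (hℓ : 1 ≤ ℓ) (hT : glt ℓ 1 d ≤ 2^ℓ) :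
    st18_pos ℓ d ℓ = st18_pos ℓ d 1 + ((2^ℓ - glt ℓ 1 d : ℕ) : ZMod (2^ℓ)) := by
  have h2 : ((d ℓ + glt ℓ 1 d : ℕ) : ZMod (2^ℓ)) + ((2^ℓ - glt ℓ 1 d : ℕ) : ZMod (2^ℓ))
      = ((d ℓ + glt ℓ ℓ d + 2^ℓ : ℕ) : ZMod (2^ℓ)) := by
    rw [← Nat.cast_add]
    congr 1
    rw [st18_glt_last]
    omega
  unfold st18_pos
  rw [h2]
  simp [Nat.cast_add, ZMod.natCast_self]

lemma st18_gap_at {ℓ : ℕ} {d : ℕ → ℕ} (hℓ : 3 ≤ ℓ) (hv : Vd ℓ d) {j : ℕ}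
    (h1 : 1 ≤ j) (hj : j ≤ ℓ) :
    st18_isGap ℓ (gapEncode ℓ d) (st18_pos ℓ d j)
      (if j = 1 then 2^ℓ - glt ℓ 1 d else glt ℓ (j-1) d - glt ℓ j d) := by
  have hT := st18_Tlt hℓ hv
  by_cases hj1 : j = 1
  · subst hj1
    rw [if_pos rfl]
    refine ⟨by omega, ?_, ?_⟩
    · rw [← st18_pos_wrap d (by omega) (le_of_lt hT)]
      rw [st18_mem_iff (by omega) d]
      exact ⟨ℓ, by omega, le_refl ℓ, rfl⟩
    · intro s hs hslt
      rw [Bool.eq_false_iff]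
      intro hmem
      rw [st18_mem_iff (by omega) d] at hmem
      obtain ⟨j', hj'1, hj'ℓ, hj'e⟩ := hmem
      have hcast : ((d ℓ + glt ℓ 1 d + s : ℕ) : ZMod (2^ℓ)) = ((d ℓ + glt ℓ j' d : ℕ) : ZMod (2^ℓ)) := by
        have he : ((d ℓ + glt ℓ 1 d : ℕ) : ZMod (2^ℓ)) + ((s : ℕ) : ZMod (2^ℓ))
            = ((d ℓ + glt ℓ j' d : ℕ) : ZMod (2^ℓ)) := hj'e
        rw [← he]
        push_cast
        ring
      have h := (ZMod.natCast_eq_natCast_iff _ _ _).mp hcast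
      have h2 : d ℓ + (glt ℓ 1 d + s) ≡ d ℓ + glt ℓ j' d [MOD 2^ℓ] := by
        have e : d ℓ + glt ℓ 1 d + s = d ℓ + (glt ℓ 1 d + s) := by omega
        rwa [e] at h
      have hmodeq : glt ℓ 1 d + s ≡ glt ℓ j' d [MOD 2^ℓ] := h2.add_left_cancel' _
      have hb' : glt ℓ j' d + (j' - 1) ≤ glt ℓ 1 d := st18_glt_anti d hj'1 hj'ℓ
      have heqn : glt ℓ 1 d + s = glt ℓ j' d := by
        have e1 : (glt ℓ 1 d + s) % 2^ℓ = glt ℓ j' d % 2^ℓ := hmodeq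
        rw [Nat.mod_eq_of_lt (by omega), Nat.mod_eq_of_lt (by omega)] at e1
        exact e1
      omega
  · rw [if_neg hj1]
    have h2j : 2 ≤ j := by omega
    have hstep : glt ℓ j d + 1 ≤ glt ℓ (j-1) d := by
      have := st18_glt_anti d (show j - 1 ≤ j by omega) hj
      omega
    have hbj1 : glt ℓ (j-1) d + (j - 2) ≤ glt ℓ 1 d := by
      have := st18_glt_anti d (show 1 ≤ j - 1 by omega) (show j - 1 ≤ ℓ by omega)
      omega
    refine ⟨by omega, ?_, ?_⟩
    · rw [← st18_pos_succ d h2j hj]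
      rw [st18_mem_iff (by omega) d]
      exact ⟨j-1, by omega, by omega, rfl⟩
    · intro s hs hslt
      rw [Bool.eq_false_iff]
      intro hmem
      rw [st18_mem_iff (by omega) d] at hmem
      obtain ⟨j', hj'1, hj'ℓ, hj'e⟩ := hmem
      have hcast : ((d ℓ + glt ℓ j d + s : ℕ) : ZMod (2^ℓ)) = ((d ℓ + glt ℓ j' d : ℕ) : ZMod (2^ℓ)) := by
        have he : ((d ℓ + glt ℓ j d : ℕ) : ZMod (2^ℓ)) + ((s : ℕ) : ZMod (2^ℓ))
            = ((d ℓ + glt ℓ j' d : ℕ) : ZMod (2^ℓ)) := hj'e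
        rw [← he]
        push_cast
        ring
      have h := (ZMod.natCast_eq_natCast_iff _ _ _).mp hcast
      have h2 : d ℓ + (glt ℓ j d + s) ≡ d ℓ + glt ℓ j' d [MOD 2^ℓ] := by
        have e : d ℓ + glt ℓ j d + s = d ℓ + (glt ℓ j d + s) := by omega
        rwa [e] at h
      have hmodeq : glt ℓ j d + s ≡ glt ℓ j' d [MOD 2^ℓ] := h2.add_left_cancel' _
      have hbj : glt ℓ j d + (j - 1) ≤ glt ℓ 1 d := st18_glt_anti d h1 hj
      have hb' : glt ℓ j' d + (j' - 1) ≤ glt ℓ 1 d := st18_glt_anti d hj'1 hj'ℓ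
      have heqn : glt ℓ j d + s = glt ℓ j' d := by
        have e1 : (glt ℓ j d + s) % 2^ℓ = glt ℓ j' d % 2^ℓ := hmodeq
        rw [Nat.mod_eq_of_lt (by omega), Nat.mod_eq_of_lt (by omega)] at e1
        exact e1
      have hlt1 : j' < j := by
        by_contra hc
        push_neg at hc
        have := st18_glt_anti d hc hj'ℓ
        omega
      have hle2 : j' ≤ j - 1 := by omega
      have := st18_glt_anti d hle2 (show j - 1 ≤ ℓ by omega)
      omega

lemma st18_chain {ℓ : ℕ} {d d' : ℕ → ℕ} (hℓ : 3 ≤ ℓ) (hv : Vd ℓ d) (hv' : Vd ℓ d')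
    (heq : gapEncode ℓ d = gapEncode ℓ d') {j₀ : ℕ} (h1 : 1 ≤ j₀) (hj₀ : j₀ ≤ ℓ)
    (hbase : st18_pos ℓ d' ℓ = st18_pos ℓ d j₀) :
    ∀ m, m ≤ ℓ - 1 →
      st18_pos ℓ d' (ℓ - m) = st18_pos ℓ d (if m < j₀ then j₀ - m else ℓ + j₀ - m) := by
  intro m
  induction m with
  | zero =>
    intro _
    have h : (if 0 < j₀ then j₀ - 0 else ℓ + j₀ - 0) = j₀ := by split <;> omega
    rw [h]
    exact hbase
  | succ m ih =>
    intro hm1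
    have hz := ih (by omega)
    obtain ⟨i, hidef⟩ : ∃ i, (if m < j₀ then j₀ - m else ℓ + j₀ - m) = i := ⟨_, rfl⟩
    rw [hidef] at hz
    have hi1 : 1 ≤ i := by rw [← hidef]; split <;> omega
    have hiℓ : i ≤ ℓ := by rw [← hidef]; split <;> omega
    have hgap' := st18_gap_at hℓ hv' (show 1 ≤ ℓ - m by omega) (show ℓ - m ≤ ℓ by omega)
    rw [if_neg (show ¬ (ℓ - m = 1) by omega)] at hgap'
    rw [← heq, hz] at hgap'
    have hgap := st18_gap_at hℓ hv hi1 hiℓ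
    have hru := st18_isGap_unique hgap' hgap
    have egoal : ℓ - (m+1) = ℓ - m - 1 := by omega
    rw [egoal]
    have hsucc' := st18_pos_succ d' (show 2 ≤ ℓ - m by omega) (show ℓ - m ≤ ℓ by omega)
    rw [hsucc', hz, hru]
    by_cases hi' : i = 1
    · rw [if_pos hi', hi']
      rw [← st18_pos_wrap d (by omega) (le_of_lt (st18_Tlt hℓ hv))]
      have h : (if m + 1 < j₀ then j₀ - (m+1) else ℓ + j₀ - (m+1)) = ℓ := by
        rcases Nat.lt_or_ge m j₀ with hc | hc
        · rw [if_pos hc] at hidef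
          split <;> omega
        · rw [if_neg (by omega : ¬ m < j₀)] at hidef
          split <;> omega
      rw [h]
    · rw [if_neg hi']
      rw [← st18_pos_succ d (show 2 ≤ i by omega) hiℓ]
      have h : (if m + 1 < j₀ then j₀ - (m+1) else ℓ + j₀ - (m+1)) = i - 1 := by
        rcases Nat.lt_or_ge m j₀ with hc | hc
        · rw [if_pos hc] at hidef
          split <;> omega
        · rw [if_neg (by omega : ¬ m < j₀)] at hidef
          split <;> omega
      rw [h]

lemma st18_chain_gap {ℓ : ℕ} {d d' : ℕ → ℕ} (hℓ : 3 ≤ ℓ) (hv : Vd ℓ d) (hv' : Vd ℓ d')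
    (heq : gapEncode ℓ d = gapEncode ℓ d') {j₀ : ℕ} (h1 : 1 ≤ j₀) (hj₀ : j₀ ≤ ℓ)
    (hbase : st18_pos ℓ d' ℓ = st18_pos ℓ d j₀) :
    ∀ m, m ≤ ℓ - 2 →
      1 + d' (ℓ - m - 1) = (if (if m < j₀ then j₀ - m else ℓ + j₀ - m) = 1
        then 2^ℓ - glt ℓ 1 d
        else 1 + d ((if m < j₀ then j₀ - m else ℓ + j₀ - m) - 1)) := by
  intro m hm
  have hz := st18_chain hℓ hv hv' heq h1 hj₀ hbase m (by omega)
  obtain ⟨i, hidef⟩ : ∃ i, (if m < j₀ then j₀ - m else ℓ + j₀ - m) = i := ⟨_, rfl⟩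
  rw [hidef] at hz ⊢
  have hi1 : 1 ≤ i := by rw [← hidef]; split <;> omega
  have hiℓ : i ≤ ℓ := by rw [← hidef]; split <;> omega
  have hgap' := st18_gap_at hℓ hv' (show 1 ≤ ℓ - m by omega) (show ℓ - m ≤ ℓ by omega)
  rw [if_neg (show ¬ (ℓ - m = 1) by omega)] at hgap'
  rw [← heq, hz] at hgap'
  have hgap := st18_gap_at hℓ hv hi1 hiℓ
  have hru := st18_isGap_unique hgap' hgap
  have hstep' : glt ℓ (ℓ - m - 1) d' = 1 + d' (ℓ - m - 1) + glt ℓ (ℓ - m) d' := by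
    have h := st18_glt_step d' (show ℓ - m - 1 < ℓ by omega)
    have e : ℓ - m - 1 + 1 = ℓ - m := by omega
    rw [e] at h
    exact h
  have hanti' : glt ℓ (ℓ - m) d' ≤ glt ℓ (ℓ - m - 1) d' := by omega
  by_cases hi' : i = 1
  · rw [if_pos hi']
    rw [if_pos hi'] at hru
    omega
  · rw [if_neg hi']
    rw [if_neg hi'] at hru
    have hstepi : glt ℓ (i - 1) d = 1 + d (i - 1) + glt ℓ i d := by
      have h := st18_glt_step d (show i - 1 < ℓ by omega)
      have e : i - 1 + 1 = i := by omega
      rw [e] at h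
      exact h
    omega

lemma st18_inj {ℓ : ℕ} {d d' : ℕ → ℕ} (hℓ : 3 ≤ ℓ) (hv : Vd ℓ d) (hv' : Vd ℓ d')
    (heq : gapEncode ℓ d = gapEncode ℓ d') :
    ∀ i, 1 ≤ i → i ≤ ℓ → d i = d' i := by
  have hmem : gapEncode ℓ d (st18_pos ℓ d' ℓ) = true := by
    rw [heq, st18_mem_iff (by omega) d']
    exact ⟨ℓ, by omega, le_refl _, rfl⟩
  rw [st18_mem_iff (by omega) d] at hmem
  obtain ⟨j₀, h1, hj₀, hbase⟩ := hmem
  rcases Nat.eq_or_lt_of_le hj₀ with hjeq | hjlt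
  · intro i hi1 hiℓ
    rcases Nat.eq_or_lt_of_le hiℓ with hieq | hilt
    · rw [hjeq] at hbase
      have hc : ((d' ℓ + glt ℓ ℓ d' : ℕ) : ZMod (2^ℓ)) = ((d ℓ + glt ℓ ℓ d : ℕ) : ZMod (2^ℓ)) :=
        hbase
      rw [st18_glt_last d', st18_glt_last d] at hc
      have hdℓ := hv ℓ (Finset.mem_Icc.mpr ⟨by omega, le_refl _⟩)
      have hdℓ' := hv' ℓ (Finset.mem_Icc.mpr ⟨by omega, le_refl _⟩)
      rw [st18_fl_last] at hdℓ hdℓ'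
      have := st18_cast_inj (show d' ℓ + 0 < 2^ℓ by omega) (show d ℓ + 0 < 2^ℓ by omega) hc
      rw [hieq]
      omega
    · have hg := st18_chain_gap hℓ hv hv' heq h1 hj₀ hbase (ℓ - 1 - i) (by omega)
      rw [if_pos (by omega : ℓ - 1 - i < j₀)] at hg
      rw [if_neg (by omega : ¬ (j₀ - (ℓ - 1 - i)) = 1)] at hg
      have e : j₀ - (ℓ - 1 - i) - 1 = i := by omega
      have e2 : ℓ - (ℓ - 1 - i) - 1 = i := by omega
      rw [e, e2] at hg
      omega
  · exfalso
    have hg := st18_chain_gap hℓ hv hv' heq h1 hj₀ hbase (j₀ - 1) (by omega)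
    rw [if_pos (by omega : j₀ - 1 < j₀)] at hg
    have e : j₀ - (j₀ - 1) = 1 := by omega
    rw [e, if_pos rfl] at hg
    have e2 : ℓ - (j₀ - 1) - 1 = ℓ - j₀ := by omega
    rw [e2] at hg
    have hiv1 : 1 ≤ ℓ - j₀ := by omega
    have hiv2 : ℓ - j₀ ≤ ℓ - 1 := by omega
    have hd'b : d' (ℓ - j₀) < 2 ^ fl ℓ (ℓ - j₀) :=
      hv' _ (Finset.mem_Icc.mpr ⟨hiv1, by omega⟩)
    have hTb := st18_T_bound hℓ hv
    have hTlt := st18_Tlt hℓ hv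
    have hfl_le : fl ℓ (ℓ - j₀) ≤ ℓ - Nat.log 2 ℓ := st18_fl_le hℓ hiv1 hiv2
    have hmono : (2:ℕ) ^ fl ℓ (ℓ - j₀) ≤ 2 ^ (ℓ - Nat.log 2 ℓ) :=
      Nat.pow_le_pow_right (by norm_num) hfl_le
    have h2u : (2:ℕ)^(ℓ - Nat.log 2 ℓ) = 2 * 2^(ℓ - Nat.log 2 ℓ - 1) := by
      rw [← pow_succ']
      congr 1
      have := st18_k_add_two_le hℓ
      omega
    have hpos : 0 < 2^(ℓ - Nat.log 2 ℓ - 1) := Nat.pow_pos (by norm_num)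
    by_cases hp : 2 ^ Nat.log 2 ℓ = ℓ
    · have hTb2 := st18_T_bound_pow hℓ hp hv
      omega
    · rcases le_or_gt (ℓ - j₀) (2*ℓ - 2^(Nat.log 2 ℓ + 1)) with hsm | hbg
      · have hfl := st18_fl_np_small hℓ hp hiv1 hsm
        rw [hfl] at hd'b
        omega
      · have hfl := st18_fl_np_big hℓ hp hbg hiv2
        rw [hfl] at hd'b
        have hTeq : glt ℓ 1 d + 2^(ℓ - Nat.log 2 ℓ) = 2^ℓ := by omega
        have hmax := st18_T_max_np hℓ hp hv hTeq
        obtain ⟨a, hadef⟩ : ∃ a, 2*ℓ - 2^(Nat.log 2 ℓ + 1) = a := ⟨_, rfl⟩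
        have hlt : 2 ^ Nat.log 2 ℓ < ℓ := lt_of_le_of_ne (st18_pow_log_le hℓ) hp
        have hub : ℓ < 2 ^ (Nat.log 2 ℓ + 1) := st18_lt_pow_succ ℓ
        have hpw : (2:ℕ)^(Nat.log 2 ℓ + 1) = 2 * 2^(Nat.log 2 ℓ) := by ring
        have ha1 : 1 ≤ a := by omega
        have ha2 : a ≤ ℓ - 1 := by omega
        have hbg' : a < ℓ - j₀ := by omega
        have hj₀a : j₀ + a ≤ ℓ - 1 := by omega
        have hg2 := st18_chain_gap hℓ hv hv' heq h1 hj₀ hbase (ℓ - 1 - a) (by omega)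
        rw [if_neg (by omega : ¬ (ℓ - 1 - a < j₀))] at hg2
        have e3 : ℓ + j₀ - (ℓ - 1 - a) = j₀ + a + 1 := by omega
        rw [e3] at hg2
        rw [if_neg (by omega : ¬ (j₀ + a + 1 = 1))] at hg2
        have e4 : ℓ - (ℓ - 1 - a) - 1 = a := by omega
        have e5 : j₀ + a + 1 - 1 = j₀ + a := by omega
        rw [e4, e5] at hg2
        have hd'a : d' a < 2 ^ fl ℓ a := hv' a (Finset.mem_Icc.mpr ⟨ha1, by omega⟩)
        have hfla : fl ℓ a = ℓ - Nat.log 2 ℓ - 1 := st18_fl_np_small hℓ hp ha1 (by omega)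
        have hmaxv := hmax (j₀ + a) (by omega) (by omega)
        have hflb : fl ℓ (j₀ + a) = ℓ - Nat.log 2 ℓ := st18_fl_np_big hℓ hp (by omega) (by omega)
        rw [hfla] at hd'a
        rw [hflb] at hmaxv
        omega

/-- Cyclic shift of a length-`n` binary vector by `n₀`. -/
def shiftc (n : ℕ) (c : ZMod n → Bool) (n₀ : ZMod n) : ZMod n → Bool :=
  fun z => c (z - n₀)

lemma st18_shift {ℓ : ℕ} (hℓ : 3 ≤ ℓ) (d : ℕ → ℕ) (n₀ : ZMod (2^ℓ)) :
    shiftc (2^ℓ) (gapEncode ℓ d) n₀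
      = gapEncode ℓ (Function.update d ℓ ((d ℓ + n₀.val) % 2^ℓ)) := by
  haveI : NeZero (2^ℓ) := ⟨by positivity⟩
  funext z
  unfold shiftc gapEncode
  apply decide_eq_decide.mpr
  have hupd_top : Function.update d ℓ ((d ℓ + n₀.val) % 2^ℓ) ℓ = (d ℓ + n₀.val) % 2^ℓ :=
    Function.update_self _ _ _
  apply exists_congr
  intro j
  apply and_congr_right
  intro hj
  rw [Finset.mem_Icc] at hj
  have hsum : (∑ i ∈ Finset.Icc j (ℓ-1), (1 + Function.update d ℓ ((d ℓ + n₀.val) % 2^ℓ) i))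
      = ∑ i ∈ Finset.Icc j (ℓ-1), (1 + d i) := by
    apply Finset.sum_congr rfl
    intro i hi
    rw [Finset.mem_Icc] at hi
    rw [Function.update_of_ne (by omega : i ≠ ℓ)]
  rw [hsum, hupd_top]
  have hcast : (((d ℓ + n₀.val) % 2^ℓ + ∑ i ∈ Finset.Icc j (ℓ-1), (1 + d i) : ℕ) : ZMod (2^ℓ))
      = ((d ℓ + ∑ i ∈ Finset.Icc j (ℓ-1), (1 + d i) : ℕ) : ZMod (2^ℓ)) + n₀ := by
    rw [Nat.cast_add, ZMod.natCast_mod, Nat.cast_add, Nat.cast_add]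
    rw [ZMod.natCast_rightInverse n₀]
    ring
  rw [hcast, sub_eq_iff_eq_add]

lemma st18_upd_valid {ℓ : ℕ} {d : ℕ → ℕ} (hℓ : 3 ≤ ℓ) (hv : Vd ℓ d) {v : ℕ}
    (hvlt : v < 2^ℓ) : Vd ℓ (Function.update d ℓ v) := by
  intro i hi
  rw [Finset.mem_Icc] at hi
  by_cases hiℓ : i = ℓ
  · subst hiℓ
    rw [Function.update_self, st18_fl_last]
    exact hvlt
  · rw [Function.update_of_ne hiℓ]
    exact hv i (Finset.mem_Icc.mpr hi)

lemma st18_weight {ℓ : ℕ} {d : ℕ → ℕ} (hℓ : 3 ≤ ℓ) (hv : Vd ℓ d) :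
    (Finset.univ.filter fun z => gapEncode ℓ d z = true).card = ℓ := by
  haveI : NeZero (2^ℓ) := ⟨by positivity⟩
  have hset : (Finset.univ.filter fun z => gapEncode ℓ d z = true)
      = (Finset.Icc 1 ℓ).image (st18_pos ℓ d) := by
    ext z
    simp only [Finset.mem_filter, Finset.mem_univ, true_and, Finset.mem_image, Finset.mem_Icc]
    rw [st18_mem_iff (by omega) d]
    constructor
    · rintro ⟨j, h1, h2, h⟩; exact ⟨j, ⟨h1, h2⟩, h.symm⟩
    · rintro ⟨j, ⟨h1, h2⟩, h⟩; exact ⟨j, h1, h2, h.symm⟩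
  rw [hset, Finset.card_image_of_injOn, Nat.card_Icc]
  · omega
  · intro x hx y hy hxy
    simp only [Finset.coe_Icc, Set.mem_Icc] at hx hy
    exact st18_pos_eq (st18_Tlt hℓ hv) hx.1 hx.2 hy.1 hy.2 hxy

def st18_D (ℓ : ℕ) (x : ∀ i : Fin ℓ, Fin (2 ^ fl ℓ (i.1+1))) : ℕ → ℕ :=
  fun n => if h : n - 1 < ℓ ∧ 1 ≤ n then (x ⟨n-1, h.1⟩).1 else 0

lemma st18_D_valid {ℓ : ℕ} (hℓ : 3 ≤ ℓ) (x : ∀ i : Fin ℓ, Fin (2 ^ fl ℓ (i.1+1))) :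
    Vd ℓ (st18_D ℓ x) := by
  intro i hi
  rw [Finset.mem_Icc] at hi
  unfold st18_D
  rw [dif_pos (⟨by omega, hi.1⟩ : i - 1 < ℓ ∧ 1 ≤ i)]
  have hb : (x ⟨i-1, by omega⟩).1 < 2 ^ fl ℓ (i - 1 + 1) := (x ⟨i-1, by omega⟩).isLt
  have e : i - 1 + 1 = i := by omega
  have e2 : (2:ℕ) ^ fl ℓ (i - 1 + 1) = 2 ^ fl ℓ i := by rw [e]
  exact lt_of_lt_of_le hb e2.le

lemma st18_D_eval {ℓ : ℕ} (x : ∀ i : Fin ℓ, Fin (2 ^ fl ℓ (i.1+1))) (i : Fin ℓ) :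
    st18_D ℓ x (i.1+1) = (x i).1 := by
  unfold st18_D
  rw [dif_pos (⟨by simpa using i.isLt, by omega⟩ : i.1 + 1 - 1 < ℓ ∧ 1 ≤ i.1 + 1)]
  rfl

open Classical in
theorem stmt18 (ℓ : ℕ) (hℓ : 3 ≤ ℓ)
    (C : Set (ZMod (2 ^ ℓ) → Bool))
    (hC : C = {c | ∃ d : ℕ → ℕ,
      (∀ i ∈ Finset.Icc 1 ℓ, d i < 2 ^ fl ℓ i) ∧ c = gapEncode ℓ d})
    (p : ℕ)
    (hp : p * 2 ^ ℓ = (Finset.univ.filter fun c : ZMod (2 ^ ℓ) → Bool =>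
        (Finset.univ.filter fun z => c z = true).card = ℓ ∧
        ∀ n₀ : ZMod (2 ^ ℓ), n₀ ≠ 0 → shiftc (2 ^ ℓ) c n₀ ≠ c).card) :
    (∀ c ∈ C, ∀ n₀ : ZMod (2 ^ ℓ), shiftc (2 ^ ℓ) c n₀ ∈ C) ∧
    (∀ c ∈ C, ∀ n₀ n₁ : ZMod (2 ^ ℓ),
      shiftc (2 ^ ℓ) c n₀ = shiftc (2 ^ ℓ) c n₁ → n₀ = n₁) ∧
    ∑ i ∈ Finset.Icc 1 ℓ, fl ℓ i ≤ ℓ + Nat.log 2 p := by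
  haveI hNZ : NeZero (2^ℓ) := ⟨by positivity⟩
  have hval : ∀ (n₀ : ZMod (2^ℓ)), ((n₀.val : ℕ) : ZMod (2^ℓ)) = n₀ := fun n₀ =>
    ZMod.natCast_rightInverse n₀
  subst hC
  refine ⟨?_, ?_, ?_⟩
  · rintro c ⟨d, hvd, rfl⟩ n₀
    exact ⟨Function.update d ℓ ((d ℓ + n₀.val) % 2^ℓ),
      st18_upd_valid hℓ hvd (Nat.mod_lt _ (by positivity)),
      st18_shift hℓ d n₀⟩
  · rintro c ⟨d, hvd, rfl⟩ n₀ n₁ hsh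
    rw [st18_shift hℓ d n₀, st18_shift hℓ d n₁] at hsh
    have hv₀ : Vd ℓ (Function.update d ℓ ((d ℓ + n₀.val) % 2^ℓ)) :=
      st18_upd_valid hℓ hvd (Nat.mod_lt _ (by positivity))
    have hv₁ : Vd ℓ (Function.update d ℓ ((d ℓ + n₁.val) % 2^ℓ)) :=
      st18_upd_valid hℓ hvd (Nat.mod_lt _ (by positivity))
    have h := st18_inj hℓ hv₀ hv₁ hsh ℓ (le_trans (by norm_num) hℓ) (le_refl _)
    rw [Function.update_self, Function.update_self] at h
    have hc : (((d ℓ + n₀.val) % 2^ℓ : ℕ) : ZMod (2^ℓ))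
        = (((d ℓ + n₁.val) % 2^ℓ : ℕ) : ZMod (2^ℓ)) := by rw [h]
    rw [ZMod.natCast_mod, ZMod.natCast_mod, Nat.cast_add, Nat.cast_add, hval n₀, hval n₁] at hc
    exact add_left_cancel hc
  · have hmaps : ∀ x : (∀ i : Fin ℓ, Fin (2 ^ fl ℓ (i.1+1))),
        gapEncode ℓ (st18_D ℓ x) ∈ (Finset.univ.filter fun c : ZMod (2 ^ ℓ) → Bool =>
          (Finset.univ.filter fun z => c z = true).card = ℓ ∧
          ∀ n₀ : ZMod (2 ^ ℓ), n₀ ≠ 0 → shiftc (2 ^ ℓ) c n₀ ≠ c) := by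
      intro x
      rw [Finset.mem_filter]
      refine ⟨Finset.mem_univ _, st18_weight hℓ (st18_D_valid hℓ x), ?_⟩
      intro n₀ hn₀ hc
      rw [st18_shift hℓ _ n₀] at hc
      have hvD := st18_D_valid hℓ x
      have hvU : Vd ℓ (Function.update (st18_D ℓ x) ℓ ((st18_D ℓ x ℓ + n₀.val) % 2^ℓ)) :=
        st18_upd_valid hℓ hvD (Nat.mod_lt _ (by positivity))
      have h := st18_inj hℓ hvU hvD hc ℓ (le_trans (by norm_num) hℓ) (le_refl _)
      rw [Function.update_self] at h
      have hcast : (((st18_D ℓ x ℓ + n₀.val) % 2^ℓ : ℕ) : ZMod (2^ℓ))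
          = ((st18_D ℓ x ℓ : ℕ) : ZMod (2^ℓ)) := by rw [h]
      rw [ZMod.natCast_mod, Nat.cast_add, hval n₀] at hcast
      apply hn₀
      have h0 : ((st18_D ℓ x ℓ : ℕ) : ZMod (2^ℓ)) + n₀
          = ((st18_D ℓ x ℓ : ℕ) : ZMod (2^ℓ)) + 0 := by rw [add_zero]; exact hcast
      exact add_left_cancel h0
    have hinj : Set.InjOn (fun x => gapEncode ℓ (st18_D ℓ x))
        ((Finset.univ : Finset (∀ i : Fin ℓ, Fin (2 ^ fl ℓ (i.1+1)))) : Set _) := by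
      intro x _ y _ hxy
      have h := st18_inj hℓ (st18_D_valid hℓ x) (st18_D_valid hℓ y) hxy
      funext i
      apply Fin.ext
      rw [← st18_D_eval x i, ← st18_D_eval y i]
      exact h (i.1+1) (Nat.le_add_left 1 i.1) i.isLt
    have hcard := Finset.card_le_card_of_injOn
      (fun x => gapEncode ℓ (st18_D ℓ x)) (fun x _ => hmaps x) hinj
    rw [Finset.card_univ, Fintype.card_pi] at hcard
    have hprod : ∏ i : Fin ℓ, Fintype.card (Fin (2 ^ fl ℓ (i.1+1)))
        = 2 ^ ∑ i ∈ Finset.Icc 1 ℓ, fl ℓ i := by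
      simp only [Fintype.card_fin]
      rw [Finset.prod_pow_eq_pow_sum]
      congr 1
      calc ∑ i : Fin ℓ, fl ℓ (i.1+1) = ∑ i ∈ Finset.range ℓ, fl ℓ (i+1) :=
            Fin.sum_univ_eq_sum_range (fun i => fl ℓ (i+1)) ℓ
        _ = ∑ i ∈ Finset.range ((ℓ+1) - 1), fl ℓ (1 + i) :=
            Finset.sum_congr (by norm_num) (fun i _ => by rw [Nat.add_comm])
        _ = ∑ i ∈ Finset.Ico 1 (ℓ+1), fl ℓ i := (Finset.sum_Ico_eq_sum_range _ 1 (ℓ+1)).symm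
        _ = ∑ i ∈ Finset.Icc 1 ℓ, fl ℓ i := rfl
    rw [hprod] at hcard
    rw [← hp] at hcard
    have h2 : p < 2 ^ (Nat.log 2 p + 1) := Nat.lt_pow_succ_log_self (by norm_num) p
    have h3 : p * 2^ℓ < 2 ^ (Nat.log 2 p + 1) * 2^ℓ :=
      (Nat.mul_lt_mul_right (by positivity)).mpr h2
    have h4 : 2 ^ (∑ i ∈ Finset.Icc 1 ℓ, fl ℓ i) < 2 ^ (Nat.log 2 p + 1 + ℓ) := by
      rw [pow_add]
      exact lt_of_le_of_lt hcard h3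
    have h5 := (Nat.pow_lt_pow_iff_right (by norm_num : (1:ℕ) < 2)).mp h4
    clear hp hmaps hinj hval hcard
    omega
end
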